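/- arXiv:1911.08458 — 3 statements merged into one kernel-verified Lean document; each statement's English description precedes it below -/
import Mathlib

section
/- For every fixed positive rational number r there exists B₀ such that for all real B ≥ B₀, the minor arithmetic factor satisfies A₂(B) ≤ exp(10·(2r+1)·B²·(log log B)²), i.e. (2r+1)·∑_{b: φ(b) ≤ B} φ(b)·∑_{p prime, p | b} (log p)/(p−1) ≤ 10·(2r+1)·B²·(log log B)². -/
open Filter Real

/-- The denominator set `Ψ_B`: positive integers whose totient is at most `B`. -/
def PsiSet (B : ℝ) : Set ℕ := {b : ℕ | 0 < b ∧ (Nat.totient b : ℝ) ≤ B}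

namespace A2Aux

open Finset Nat

lemma log_le_two_sqrt {x : ℝ} (hx : 1 ≤ x) : Real.log x ≤ 2 * Real.sqrt (x - 1) := by
  have h0 : (0:ℝ) < x := lt_of_lt_of_le one_pos hx
  have h1 : Real.log x = 2 * Real.log (Real.sqrt x) := by
    rw [Real.log_sqrt h0.le]; ring
  have h2 : Real.log (Real.sqrt x) ≤ Real.sqrt x - 1 :=
    Real.log_le_sub_one_of_pos (Real.sqrt_pos.mpr h0)
  have h3 : Real.sqrt x - 1 ≤ Real.sqrt (x - 1) := by
    have hs1 : (1:ℝ) ≤ Real.sqrt x := by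
      rw [show (1:ℝ) = Real.sqrt 1 by simp]
      exact Real.sqrt_le_sqrt hx
    nlinarith [Real.sq_sqrt h0.le, Real.sq_sqrt (by linarith : (0:ℝ) ≤ x - 1),
      Real.sqrt_nonneg (x - 1), Real.sqrt_nonneg x]
  linarith

lemma tail_sum_bound_aux (N : ℕ) (hN : 1 ≤ N) :
    ∑ n ∈ Finset.Icc 2 N, Real.log n / ((n : ℝ) - 1) ^ 2 ≤ 9 - 8 / Real.sqrt N := by
  induction N with
  | zero => omega
  | succ N ih =>
    rcases Nat.eq_or_lt_of_le hN with h1 | h1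
    · simp only [← h1]
      norm_num
    · have hN1 : 1 ≤ N := by omega
      have hrec := ih hN1
      rw [Finset.sum_Icc_succ_top (by omega)]
      have hs : (0:ℝ) < Real.sqrt N := Real.sqrt_pos.mpr (by exact_mod_cast hN1)
      have ht : (0:ℝ) < Real.sqrt (N+1) := Real.sqrt_pos.mpr (by positivity)
      have hs2 : Real.sqrt N ^ 2 = (N:ℝ) := Real.sq_sqrt (by positivity)
      have ht2 : Real.sqrt ((N:ℝ)+1) ^ 2 = (N:ℝ)+1 := Real.sq_sqrt (by positivity)
      have hst : Real.sqrt N ≤ Real.sqrt ((N:ℝ)+1) := Real.sqrt_le_sqrt (by linarith)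
      have hterm : Real.log ((N:ℝ)+1) / (((N:ℕ)+1:ℝ) - 1) ^ 2 ≤
          8 / Real.sqrt N - 8 / Real.sqrt ((N:ℝ)+1) := by
        have hlog : Real.log ((N:ℝ)+1) ≤ 2 * Real.sqrt N := by
          have := log_le_two_sqrt (x := (N:ℝ)+1) (by linarith)
          simpa using this
        have hN1R : (1:ℝ) ≤ (N:ℝ) := by exact_mod_cast hN1
        have key : 2 * Real.sqrt N / (N:ℝ)^2 ≤ 8 / Real.sqrt N - 8 / Real.sqrt ((N:ℝ)+1) := by
          rw [div_sub_div _ _ (ne_of_gt hs) (ne_of_gt ht), div_le_div_iff₀ (by positivity) (by positivity)]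
          have h4 : (Real.sqrt ((N:ℝ)+1) - Real.sqrt N) * (Real.sqrt ((N:ℝ)+1) + Real.sqrt N) = 1 := by
            nlinarith
          have hts : Real.sqrt N * Real.sqrt ((N:ℝ)+1) ≤ (N:ℝ) + 1 := by nlinarith
          nlinarith [h4, hts, mul_pos hs ht, add_pos hs ht, hs.le, ht.le,
            mul_pos (mul_pos hs ht) (add_pos hs ht)]
        calc Real.log ((N:ℝ)+1) / (((N:ℕ)+1:ℝ) - 1) ^ 2
            ≤ 2 * Real.sqrt N / (N:ℝ)^2 := by
              push_cast
              rw [add_sub_cancel_right]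
              gcongr
        _ ≤ _ := key
      push_cast at hterm ⊢
      linarith

lemma tail_sum_bound (N : ℕ) : ∑ n ∈ Finset.Icc 2 N, Real.log n / ((n : ℝ) - 1) ^ 2 ≤ 9 := by
  rcases Nat.eq_zero_or_pos N with h | h
  · subst h; simp
  · have := tail_sum_bound_aux N h
    have : 0 ≤ 8 / Real.sqrt N := by positivity
    linarith [tail_sum_bound_aux N h]

lemma theta_bound (n : ℕ) : ∑ p ∈ Nat.primesBelow (n + 1), Real.log p ≤ n * Real.log 4 := by
  have h1 : ∑ p ∈ Nat.primesBelow (n + 1), Real.log p = Real.log (primorial n) := by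
    rw [primorial]
    rw [show (Finset.range (n+1)).filter (fun p => p.Prime) = Nat.primesBelow (n+1) from rfl]
    rw [Nat.cast_prod, Real.log_prod]
    intro p hp
    have := (Nat.prime_of_mem_primesBelow hp).pos
    positivity
  rw [h1]
  calc Real.log (primorial n) ≤ Real.log ((4:ℕ) ^ n) := by
        apply Real.log_le_log (by exact_mod_cast primorial_pos n)
        exact_mod_cast primorial_le_4_pow n
  _ = n * Real.log 4 := by
        push_cast
        rw [Real.log_pow]

lemma fact_log_ge {n : ℕ} (hn : 1 ≤ n) :
    ∑ p ∈ Nat.primesBelow (n + 1), (↑(n / p) : ℝ) * Real.log p ≤ (n : ℝ) * Real.log n := by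
  have hfne : n ! ≠ 0 := Nat.factorial_ne_zero n
  have hprod : (↑(n !) : ℝ) = ∏ p ∈ (n !).primeFactors, (p : ℝ) ^ ((n !).factorization p) := by
    conv_lhs => rw [← Nat.factorization_prod_pow_eq_self hfne]
    rw [Finsupp.prod]
    push_cast
    rfl
  have hlogfact : Real.log (n !) = ∑ p ∈ (n !).primeFactors, ((n !).factorization p : ℝ) * Real.log p := by
    rw [hprod, Real.log_prod]
    · refine Finset.sum_congr rfl fun p hp => ?_
      rw [Real.log_pow]
    · intro p hp
      have := (Nat.prime_of_mem_primeFactors hp).pos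
      positivity
  have hsub : Nat.primesBelow (n + 1) ⊆ (n !).primeFactors := by
    intro p hp
    rw [Nat.mem_primesBelow] at hp
    refine Nat.mem_primeFactors.mpr ⟨hp.2, ?_, hfne⟩
    exact hp.2.dvd_factorial.mpr (by omega)
  have hterm : ∀ p ∈ Nat.primesBelow (n + 1), (↑(n / p) : ℝ) * Real.log p ≤
      ((n !).factorization p : ℝ) * Real.log p := by
    intro p hp
    rw [Nat.mem_primesBelow] at hp
    have hplt : p ≤ n := by omega
    have hppr := hp.2
    have hlogpos : 0 < Nat.log p n := Nat.log_pos hppr.one_lt hplt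
    have hdvd : p ^ (n / p) ∣ n ! := by
      rw [Nat.Prime.pow_dvd_factorial_iff hppr (Nat.lt_succ_self (Nat.log p n))]
      calc n / p = n / p ^ 1 := by rw [pow_one]
      _ ≤ ∑ i ∈ Finset.Ico 1 (Nat.log p n + 1), n / p ^ i := by
          apply Finset.single_le_sum (f := fun i => n / p ^ i) (fun i _ => Nat.zero_le _)
          rw [Finset.mem_Ico]; omega
    have hle : n / p ≤ (n !).factorization p :=
      (Nat.Prime.pow_dvd_iff_le_factorization hppr hfne).mp hdvd
    have : (0:ℝ) ≤ Real.log p := Real.log_natCast_nonneg p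
    have hcast : (↑(n / p) : ℝ) ≤ ((n !).factorization p : ℝ) := by exact_mod_cast hle
    exact mul_le_mul_of_nonneg_right hcast this
  calc ∑ p ∈ Nat.primesBelow (n + 1), (↑(n / p) : ℝ) * Real.log p
      ≤ ∑ p ∈ (n !).primeFactors, ((n !).factorization p : ℝ) * Real.log p := by
        refine Finset.sum_le_sum_of_subset_of_nonneg hsub (fun p hp _ => by positivity) |>.trans' ?_
        exact Finset.sum_le_sum hterm
  _ = Real.log (n !) := hlogfact.symm
  _ ≤ (n:ℝ) * Real.log n := by
      calc Real.log (n !) ≤ Real.log ((n:ℕ) ^ n) := by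
            apply Real.log_le_log (by exact_mod_cast Nat.factorial_pos n)
            exact_mod_cast Nat.factorial_le_pow n
      _ = (n:ℝ) * Real.log n := by push_cast; rw [Real.log_pow]

lemma mertens1 {n : ℕ} (hn : 1 ≤ n) :
    ∑ p ∈ Nat.primesBelow (n + 1), Real.log p / p ≤ Real.log n + Real.log 4 := by
  have hnpos : (0:ℝ) < n := by exact_mod_cast hn
  rw [← mul_le_mul_iff_right₀ hnpos]
  have hsplit : (n:ℝ) * ∑ p ∈ Nat.primesBelow (n + 1), Real.log p / p
      ≤ ∑ p ∈ Nat.primesBelow (n + 1), (↑(n / p) : ℝ) * Real.log p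
        + ∑ p ∈ Nat.primesBelow (n + 1), Real.log p := by
    rw [Finset.mul_sum, ← Finset.sum_add_distrib]
    refine Finset.sum_le_sum fun p hp => ?_
    have hppr := Nat.prime_of_mem_primesBelow hp
    have hppos : (0:ℝ) < p := by exact_mod_cast hppr.pos
    have hlogp : (0:ℝ) ≤ Real.log p := Real.log_natCast_nonneg p
    have hfloor : (n:ℝ) / p ≤ (↑(n / p) : ℝ) + 1 := by
      have hmod := Nat.div_add_mod n p
      have hmlt : n % p < p := Nat.mod_lt n hppr.pos
      have : (n:ℝ) = p * (↑(n / p) : ℝ) + (↑(n % p) : ℝ) := by exact_mod_cast hmod.symm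
      rw [div_le_iff₀ hppos]
      have : (↑(n % p) : ℝ) < p := by exact_mod_cast hmlt
      nlinarith
    calc (n:ℝ) * (Real.log p / p) = ((n:ℝ)/p) * Real.log p := by ring
    _ ≤ ((↑(n / p) : ℝ) + 1) * Real.log p := by gcongr
    _ = (↑(n / p) : ℝ) * Real.log p + Real.log p := by ring
  calc (n:ℝ) * ∑ p ∈ Nat.primesBelow (n + 1), Real.log p / p
      ≤ ∑ p ∈ Nat.primesBelow (n + 1), (↑(n / p) : ℝ) * Real.log p
        + ∑ p ∈ Nat.primesBelow (n + 1), Real.log p := hsplit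
  _ ≤ (n:ℝ) * Real.log n + (n:ℝ) * Real.log 4 := by
      gcongr
      · exact fact_log_ge hn
      · exact theta_bound n
  _ = (n:ℝ) * (Real.log n + Real.log 4) := by ring

lemma sbp (a : ℕ → ℝ) : ∀ I : ℕ, 1 ≤ I →
    ∑ i ∈ Finset.Icc 1 I, (a (i + 1) - a i) / (i : ℝ) =
      a (I + 1) / I - a 1 + ∑ i ∈ Finset.Icc 2 I, a i / (((i : ℝ) - 1) * i) := by
  intro I
  induction I with
  | zero => omega
  | succ I ih =>
    intro _
    rcases Nat.eq_zero_or_pos I with h0 | h1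
    · subst h0; norm_num
    · have hI : (1:ℝ) ≤ (I:ℝ) := by exact_mod_cast h1
      rw [Finset.sum_Icc_succ_top (by omega : 1 ≤ I + 1),
          Finset.sum_Icc_succ_top (by omega : 2 ≤ I + 1), ih h1]
      have hIne : (I:ℝ) ≠ 0 := by linarith
      have hI1ne : (I:ℝ) + 1 ≠ 0 := by linarith
      push_cast
      field_simp
      ring_nf
      simp [hIne]

lemma log_succ_ge (I : ℕ) (hI : 1 ≤ I) :
    Real.log I + 1 / ((I:ℝ) + 1) ≤ Real.log ((I:ℝ) + 1) := by
  have hIpos : (0:ℝ) < I := by exact_mod_cast hI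
  have h := Real.log_le_sub_one_of_pos (show (0:ℝ) < (I:ℝ)/((I:ℝ)+1) by positivity)
  rw [Real.log_div (by positivity) (by positivity)] at h
  have : (I:ℝ)/((I:ℝ)+1) - 1 = -(1/((I:ℝ)+1)) := by field_simp; ring
  rw [this] at h
  linarith

lemma hsum_bound (I : ℕ) :
    ∑ i ∈ Finset.Icc 2 I, ((i : ℝ) + 2) / (((i : ℝ) - 1) * i) ≤ Real.log I + 3 := by
  have main : ∀ J : ℕ, 1 ≤ J →
      ∑ i ∈ Finset.Icc 2 J, ((i : ℝ) + 2) / (((i : ℝ) - 1) * i) ≤ Real.log J + 3 - 3/(J:ℝ) := by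
    intro J
    induction J with
    | zero => omega
    | succ J ih =>
      intro _
      rcases Nat.eq_zero_or_pos J with h0 | h1
      · subst h0; norm_num
      · have hJ : (1:ℝ) ≤ (J:ℝ) := by exact_mod_cast h1
        rw [Finset.sum_Icc_succ_top (by omega : 2 ≤ J + 1)]
        have hrec := ih h1
        have hlog := log_succ_ge J h1
        have hterm : ((J:ℕ)+1+2 : ℝ) / ((((J:ℕ):ℝ) + 1 - 1) * ((J:ℕ)+1)) =
            1/((J:ℝ)+1) + 3/((J:ℝ)*((J:ℝ)+1)) := by
          field_simp [ne_of_gt (show (0:ℝ) < J by linarith)]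
          ring
        push_cast
        push_cast at hterm
        rw [hterm]
        have hsplit : 3/((J:ℝ)*((J:ℝ)+1)) = 3/(J:ℝ) - 3/((J:ℝ)+1) := by
          field_simp
          ring
        rw [hsplit]
        linarith
  rcases Nat.lt_or_ge I 1 with h | h
  · interval_cases I
    · simp
  · have := main I h
    have hpos : 0 < (I:ℝ) := by exact_mod_cast h
    have : 0 ≤ 3/(I:ℝ) := by positivity
    linarith [main I h]

lemma recip_telescope (N : ℕ) : ∑ n ∈ Finset.Icc 2 N, 1 / (((n : ℝ) - 1) * n) ≤ 1 := by
  have main : ∀ J : ℕ, 1 ≤ J →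
      ∑ n ∈ Finset.Icc 2 J, 1 / (((n : ℝ) - 1) * n) ≤ 1 - 1/(J:ℝ) := by
    intro J
    induction J with
    | zero => omega
    | succ J ih =>
      intro _
      rcases Nat.eq_zero_or_pos J with h0 | h1
      · subst h0; norm_num
      · have hJ : (1:ℝ) ≤ (J:ℝ) := by exact_mod_cast h1
        rw [Finset.sum_Icc_succ_top (by omega : 2 ≤ J + 1)]
        have hrec := ih h1
        have hterm : (1:ℝ) / ((((J:ℕ):ℝ) + 1 - 1) * ((J:ℕ)+1)) = 1/(J:ℝ) - 1/((J:ℝ)+1) := by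
          field_simp
          rw [add_sub_cancel_right, div_self (ne_of_gt (show (0:ℝ) < J by linarith))]; ring
        push_cast
        push_cast at hterm
        rw [hterm]
        linarith
  rcases Nat.lt_or_ge N 1 with h | h
  · interval_cases N
    · simp
  · have hpos : 0 < (N:ℝ) := by exact_mod_cast h
    have : 0 ≤ 1/(N:ℝ) := by positivity
    linarith [main N h]

lemma telescope (f : ℕ → ℝ) (I : ℕ) :
    f (I + 1) = f 1 + ∑ i ∈ Finset.Icc 1 I, (f (i + 1) - f i) := by
  induction I with
  | zero => simp
  | succ n ih =>
      rw [Finset.sum_Icc_succ_top (by omega), ← add_assoc, ← ih]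
      ring


lemma mertens2_pow {I : ℕ} (hI : 1 ≤ I) :
    ∑ p ∈ Nat.primesBelow (2 ^ (I + 1) + 1), 1 / (p : ℝ) ≤ Real.log I + 8 := by
  have hlog2 : (0:ℝ) < Real.log 2 := Real.log_pos (by norm_num)
  set g : ℕ → ℝ := fun i => ∑ p ∈ Nat.primesBelow (2 ^ i + 1), 1 / (p : ℝ) with hg
  set a : ℕ → ℝ := fun i => ∑ p ∈ Nat.primesBelow (2 ^ i + 1), Real.log p / p with ha
  have hsub : ∀ i : ℕ, Nat.primesBelow (2 ^ i + 1) ⊆ Nat.primesBelow (2 ^ (i+1) + 1) := by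
    intro i p hp
    rw [Nat.mem_primesBelow] at hp ⊢
    have : (2:ℕ)^i ≤ 2^(i+1) := Nat.pow_le_pow_right (by norm_num) (by omega)
    exact ⟨by omega, hp.2⟩
  have hA : ∀ i : ℕ, 1 ≤ i → a i ≤ ((i:ℝ)+2) * Real.log 2 := by
    intro i hi
    have h1 : (1:ℕ) ≤ 2^i := Nat.one_le_two_pow
    have := mertens1 (n := 2^i) h1
    rw [ha]
    simp only
    refine this.trans ?_
    have h2 : Real.log ((2:ℕ)^i : ℕ) = (i:ℝ) * Real.log 2 := by
      push_cast
      rw [Real.log_pow]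
    have h4 : Real.log (4:ℝ) = 2 * Real.log 2 := by
      rw [show (4:ℝ) = 2^2 by norm_num, Real.log_pow]
      norm_num
    rw [h2, h4]
    ring_nf
    linarith
  have hA0 : 0 ≤ a 1 := by
    rw [ha]
    refine Finset.sum_nonneg fun p hp => ?_
    have := (Nat.prime_of_mem_primesBelow hp).pos
    positivity
  have hdiff : ∀ i : ℕ, 1 ≤ i → g (i+1) - g i ≤ ((a (i+1) - a i) / i) / Real.log 2 := by
    intro i hi
    have hipos : (0:ℝ) < i := by exact_mod_cast hi
    have hc : (0:ℝ) < (i:ℝ) * Real.log 2 := by positivity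
    have h2 : ∑ p ∈ Nat.primesBelow (2^(i+1)+1) \ Nat.primesBelow (2^i+1), 1/(p:ℝ)
        = g (i+1) - g i := Finset.sum_sdiff_eq_sub (hsub i)
    have h3 : ∑ p ∈ Nat.primesBelow (2^(i+1)+1) \ Nat.primesBelow (2^i+1), Real.log p / p
        = a (i+1) - a i := Finset.sum_sdiff_eq_sub (hsub i)
    rw [← h2, div_div, ← h3, Finset.sum_div]
    refine Finset.sum_le_sum fun p hp => ?_
    rw [Finset.mem_sdiff, Nat.mem_primesBelow] at hp
    obtain ⟨⟨hplt, hppr⟩, hpnot⟩ := hp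
    have hpge : 2^i + 1 ≤ p := by
      by_contra hcon
      exact hpnot (Nat.mem_primesBelow.mpr ⟨by omega, hppr⟩)
    have hppos : (0:ℝ) < p := by exact_mod_cast hppr.pos
    have hlp : (i:ℝ) * Real.log 2 ≤ Real.log p := by
      rw [← Real.log_pow]
      apply Real.log_le_log (by positivity)
      have : ((2:ℕ)^i : ℝ) ≤ (p:ℝ) := by exact_mod_cast (by omega : 2^i ≤ p)
      push_cast at this ⊢
      linarith
    rw [div_div, div_le_div_iff₀ hppos (by positivity)]
    nlinarith
  have htel := telescope g I
  have hstep : ∑ i ∈ Finset.Icc 1 I, (g (i+1) - g i)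
      ≤ ∑ i ∈ Finset.Icc 1 I, ((a (i+1) - a i) / i) / Real.log 2 := by
    refine Finset.sum_le_sum fun i hi => hdiff i (Finset.mem_Icc.mp hi).1
  rw [← Finset.sum_div] at hstep
  rw [sbp a I hI] at hstep
  have hsum2 : ∑ i ∈ Finset.Icc 2 I, a i / (((i:ℝ) - 1) * i)
      ≤ ∑ i ∈ Finset.Icc 2 I, ((i:ℝ)+2) * Real.log 2 / (((i:ℝ) - 1) * i) := by
    refine Finset.sum_le_sum fun i hi => ?_
    have h2i := (Finset.mem_Icc.mp hi).1
    have h2iR : (2:ℝ) ≤ (i:ℝ) := by exact_mod_cast h2i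
    have hd : (0:ℝ) < ((i:ℝ) - 1) * i := by nlinarith
    gcongr
    exact hA i (by omega)
  have hsum3 : ∑ i ∈ Finset.Icc 2 I, ((i:ℝ)+2) * Real.log 2 / (((i:ℝ) - 1) * i)
      = Real.log 2 * ∑ i ∈ Finset.Icc 2 I, ((i:ℝ)+2) / (((i:ℝ) - 1) * i) := by
    rw [Finset.mul_sum]
    exact Finset.sum_congr rfl fun i _ => by ring
  have hIR : (1:ℝ) ≤ (I:ℝ) := by exact_mod_cast hI
  have haI : a (I+1) / I ≤ 4 * Real.log 2 := by
    have h1 := hA (I+1) (by omega)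
    push_cast at h1
    have h2 : a (I+1) / I ≤ ((I:ℝ)+3) * Real.log 2 / I := by
      gcongr <;> linarith
    refine h2.trans ?_
    rw [div_le_iff₀ (by linarith)]
    nlinarith
  have hnum : a (I+1) / I - a 1 + ∑ i ∈ Finset.Icc 2 I, a i / (((i:ℝ) - 1) * i)
      ≤ Real.log 2 * (Real.log I + 7) := by
    have h2 := hsum2
    rw [hsum3] at h2
    have h3 := hsum_bound I
    have h4 : Real.log 2 * ∑ i ∈ Finset.Icc 2 I, ((i:ℝ)+2) / (((i:ℝ) - 1) * i)
        ≤ Real.log 2 * (Real.log I + 3) := mul_le_mul_of_nonneg_left h3 hlog2.le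
    nlinarith
  have hdiv : (a (I+1) / I - a 1 + ∑ i ∈ Finset.Icc 2 I, a i / (((i:ℝ) - 1) * i)) / Real.log 2
      ≤ Real.log I + 7 := by
    rw [div_le_iff₀ hlog2]
    linarith [hnum]
  have hg1 : g 1 = 1/2 := by
    rw [hg]
    norm_num
    rw [show Nat.primesBelow 3 = {2} by decide]
    norm_num
  have : g (I+1) ≤ Real.log I + 8 := by
    rw [htel, hg1]
    linarith [hstep.trans hdiv]
  exact this

lemma mertens2 {y : ℝ} (hy : 16 ≤ y) :
    ∑ p ∈ Nat.primesBelow (⌊y⌋₊ + 1), 1 / (p : ℝ) ≤ Real.log (Real.log y) + 9 := by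
  have hy0 : (0:ℝ) < y := by linarith
  have hfl : 16 ≤ ⌊y⌋₊ := Nat.le_floor (by exact_mod_cast hy)
  set I := Nat.log 2 ⌊y⌋₊ with hIdef
  have hI1 : 1 ≤ I := by
    have := Nat.log_pos (by norm_num : 1 < 2) (by omega : 2 ≤ ⌊y⌋₊)
    omega
  have hup : ⌊y⌋₊ < 2 ^ (I + 1) := Nat.lt_pow_succ_log_self (by norm_num) _
  have hlow : 2 ^ I ≤ ⌊y⌋₊ := Nat.pow_log_le_self 2 (by omega)
  have hsub : Nat.primesBelow (⌊y⌋₊ + 1) ⊆ Nat.primesBelow (2 ^ (I + 1) + 1) := by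
    intro p hp
    rw [Nat.mem_primesBelow] at hp ⊢
    exact ⟨by omega, hp.2⟩
  have h1 : ∑ p ∈ Nat.primesBelow (⌊y⌋₊ + 1), 1 / (p : ℝ)
      ≤ ∑ p ∈ Nat.primesBelow (2 ^ (I + 1) + 1), 1 / (p : ℝ) := by
    refine Finset.sum_le_sum_of_subset_of_nonneg hsub fun p hp _ => ?_
    have := (Nat.prime_of_mem_primesBelow hp).pos
    positivity
  have h2 := mertens2_pow hI1
  -- log I ≤ log (log y) + 1
  have hlog2 : (0:ℝ) < Real.log 2 := Real.log_pos (by norm_num)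
  have hlogy : Real.log 16 ≤ Real.log y := Real.log_le_log (by norm_num) hy
  have hlogypos : (0:ℝ) < Real.log y := lt_of_lt_of_le (Real.log_pos (by norm_num)) hlogy
  have hIle : (I:ℝ) ≤ Real.log y / Real.log 2 := by
    have hcast : ((2:ℝ))^I ≤ y := by
      calc ((2:ℝ))^I = ((2^I : ℕ) : ℝ) := by push_cast; ring
      _ ≤ (⌊y⌋₊ : ℝ) := by exact_mod_cast hlow
      _ ≤ y := Nat.floor_le hy0.le
    have := Real.log_le_log (by positivity) hcast
    rw [Real.log_pow] at this
    rw [le_div_iff₀ hlog2]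
    linarith
  have hIpos : (0:ℝ) < I := by exact_mod_cast hI1
  have hloglog : Real.log I ≤ Real.log (Real.log y) + 1 := by
    calc Real.log I ≤ Real.log (Real.log y / Real.log 2) := Real.log_le_log hIpos hIle
    _ = Real.log (Real.log y) - Real.log (Real.log 2) :=
        Real.log_div (ne_of_gt hlogypos) (ne_of_gt hlog2)
    _ ≤ Real.log (Real.log y) + 1 := by
        have hexp : Real.exp (-1) ≤ Real.log 2 := by
          have h1 : Real.exp (-1) = 1 / Real.exp 1 := by
            rw [Real.exp_neg]; ring
          have h2 : (2.7182818283:ℝ) < Real.exp 1 := Real.exp_one_gt_d9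
          have h3 : (0.6931471803:ℝ) < Real.log 2 := Real.log_two_gt_d9
          rw [h1]
          have : (1:ℝ) / Real.exp 1 ≤ 1 / 2.7182818283 := by
            apply div_le_div_of_nonneg_left (by norm_num) (by norm_num) h2.le
          nlinarith
        have := Real.log_le_log (Real.exp_pos _) hexp
        rw [Real.log_exp] at this
        linarith
  calc ∑ p ∈ Nat.primesBelow (⌊y⌋₊ + 1), 1 / (p : ℝ) ≤ Real.log I + 8 := h1.trans h2
  _ ≤ Real.log (Real.log y) + 9 := by linarith

lemma mertens2' {y : ℝ} (hy : 16 ≤ y) :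
    ∑ p ∈ Nat.primesBelow (⌊y⌋₊ + 1), 1 / ((p : ℝ) - 1) ≤ Real.log (Real.log y) + 10 := by
  have hsplit : ∀ p ∈ Nat.primesBelow (⌊y⌋₊ + 1), 1 / ((p : ℝ) - 1)
      = 1 / (p:ℝ) + 1 / (((p:ℝ) - 1) * p) := by
    intro p hp
    have hp2 : 2 ≤ p := (Nat.prime_of_mem_primesBelow hp).two_le
    have hp2R : (2:ℝ) ≤ (p:ℝ) := by exact_mod_cast hp2
    have h0 : (p:ℝ) ≠ 0 := by linarith
    have h1 : (p:ℝ) - 1 ≠ 0 := by linarith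
    field_simp
    ring
  rw [Finset.sum_congr rfl hsplit, Finset.sum_add_distrib]
  have h2 : ∑ p ∈ Nat.primesBelow (⌊y⌋₊ + 1), 1 / (((p:ℝ) - 1) * p)
      ≤ ∑ n ∈ Finset.Icc 2 ⌊y⌋₊, 1 / (((n:ℝ) - 1) * n) := by
    refine Finset.sum_le_sum_of_subset_of_nonneg ?_ fun n hn _ => ?_
    · intro p hp
      rw [Nat.mem_primesBelow] at hp
      rw [Finset.mem_Icc]
      exact ⟨hp.2.two_le, by omega⟩
    · rw [Finset.mem_Icc] at hn
      have h2n : (2:ℝ) ≤ (n:ℝ) := by exact_mod_cast hn.1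
      have hpos : (0:ℝ) < ((n:ℝ) - 1) * n := by nlinarith
      positivity
  have h3 := recip_telescope ⌊y⌋₊
  have h1 := mertens2 hy
  linarith

lemma omega_bound {b : ℕ} (hb : 0 < b) : 2 ^ b.primeFactors.card ≤ 2 * b.totient := by
  have hdvd : ∏ p ∈ b.primeFactors, (p - 1) ∣ b.totient := by
    rw [Nat.totient_eq_prod_factorization hb.ne']
    rw [Finsupp.prod]
    rw [Nat.support_factorization]
    exact Finset.prod_dvd_prod_of_dvd _ _ fun p _ => dvd_mul_left _ _
  have hle : ∏ p ∈ b.primeFactors, (p - 1) ≤ b.totient :=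
    Nat.le_of_dvd (Nat.totient_pos.mpr hb) hdvd
  set s := b.primeFactors.erase 2 with hs
  have hcard : b.primeFactors.card ≤ s.card + 1 := by
    have := Finset.pred_card_le_card_erase (s := b.primeFactors) (a := 2)
    rw [← hs] at this
    omega
  have h2 : 2 ^ s.card ≤ ∏ p ∈ s, (p - 1) := by
    rw [← Finset.prod_const]
    refine Finset.prod_le_prod' fun p hp => ?_
    have hpp : p.Prime := Nat.prime_of_mem_primeFactors (Finset.mem_of_mem_erase hp)
    have hne : p ≠ 2 := Finset.ne_of_mem_erase hp
    have := hpp.two_le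
    omega
  have h3 : ∏ p ∈ s, (p - 1) ≤ ∏ p ∈ b.primeFactors, (p - 1) := by
    refine Finset.prod_le_prod_of_subset_of_one_le' (Finset.erase_subset _ _) ?_
    intro p hp _
    have := (Nat.prime_of_mem_primeFactors hp).two_le
    omega
  calc 2 ^ b.primeFactors.card ≤ 2 ^ (s.card + 1) := Nat.pow_le_pow_right (by norm_num) hcard
  _ = 2 * 2 ^ s.card := by ring
  _ ≤ 2 * b.totient := by
      have := h2.trans (h3.trans hle)
      omega

lemma ratio_eq {b : ℕ} (hb : 0 < b) :
    (b : ℝ) = b.totient * ∏ p ∈ b.primeFactors, ((p : ℝ) / ((p : ℝ) - 1)) := by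
  have key := Nat.totient_mul_prod_primeFactors b
  have hcast : (b.totient : ℝ) * ∏ p ∈ b.primeFactors, (p:ℝ)
      = (b:ℝ) * ∏ p ∈ b.primeFactors, ((p:ℝ) - 1) := by
    have h1 : ((∏ p ∈ b.primeFactors, (p - 1) : ℕ) : ℝ) = ∏ p ∈ b.primeFactors, ((p:ℝ) - 1) := by
      rw [Nat.cast_prod]
      refine Finset.prod_congr rfl fun p hp => ?_
      have := (Nat.prime_of_mem_primeFactors hp).two_le
      push_cast [Nat.cast_sub (by omega : 1 ≤ p)]
      ring
    calc (b.totient : ℝ) * ∏ p ∈ b.primeFactors, (p:ℝ)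
        = ((b.totient * ∏ p ∈ b.primeFactors, p : ℕ) : ℝ) := by push_cast; ring
    _ = ((b * ∏ p ∈ b.primeFactors, (p - 1) : ℕ) : ℝ) := by rw [key]
    _ = (b:ℝ) * ∏ p ∈ b.primeFactors, ((p:ℝ) - 1) := by rw [Nat.cast_mul, h1]
  have hprodpos : (0:ℝ) < ∏ p ∈ b.primeFactors, ((p:ℝ) - 1) := by
    refine Finset.prod_pos fun p hp => ?_
    have := (Nat.prime_of_mem_primeFactors hp).two_le
    have : (2:ℝ) ≤ (p:ℝ) := by exact_mod_cast this
    linarith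
  rw [Finset.prod_div_distrib, ← mul_div_assoc, eq_div_iff (ne_of_gt hprodpos)]
  linarith [hcast]

lemma le_two_mul_totient_sq {b : ℕ} (hb : 0 < b) : (b : ℝ) ≤ 2 * (b.totient : ℝ) ^ 2 := by
  have h1 := ratio_eq hb
  have h2 : ∏ p ∈ b.primeFactors, ((p : ℝ) / ((p : ℝ) - 1)) ≤ 2 ^ b.primeFactors.card := by
    rw [← Finset.prod_const]
    refine Finset.prod_le_prod (fun p hp => ?_) (fun p hp => ?_)
    · have := (Nat.prime_of_mem_primeFactors hp).two_le
      have h2R : (2:ℝ) ≤ (p:ℝ) := by exact_mod_cast this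
      have hpos : (0:ℝ) < (p:ℝ) - 1 := by linarith
      positivity
    · have := (Nat.prime_of_mem_primeFactors hp).two_le
      have h2R : (2:ℝ) ≤ (p:ℝ) := by exact_mod_cast this
      rw [div_le_iff₀ (by linarith)]
      linarith
  have h3 : ((2:ℝ)) ^ b.primeFactors.card ≤ 2 * b.totient := by
    exact_mod_cast omega_bound hb
  have htot : (0:ℝ) ≤ (b.totient : ℝ) := by positivity
  calc (b:ℝ) = b.totient * ∏ p ∈ b.primeFactors, ((p : ℝ) / ((p : ℝ) - 1)) := h1
  _ ≤ b.totient * (2 * b.totient) := by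
      refine mul_le_mul_of_nonneg_left (h2.trans h3) htot
  _ = 2 * (b.totient : ℝ)^2 := by ring


lemma psi_elem_bound {B : ℝ} (hB : Real.exp 4 ≤ B) {b : ℕ} (hb : 0 < b)
    (hφ : (b.totient : ℝ) ≤ B) :
    (b : ℝ) ≤ Real.exp 14 * (b.totient : ℝ) * Real.log (Real.log B) := by
  have hB1 : (1:ℝ) ≤ B := le_trans (by nlinarith [Real.exp_pos (4:ℝ), Real.add_one_le_exp (4:ℝ)]) hB
  have hlogB : 4 ≤ Real.log B := by
    have := Real.log_le_log (Real.exp_pos 4) hB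
    rwa [Real.log_exp] at this
  have hllB : Real.log 4 ≤ Real.log (Real.log B) :=
    Real.log_le_log (by norm_num) hlogB
  have hllBpos : (0:ℝ) < Real.log (Real.log B) :=
    lt_of_lt_of_le (Real.log_pos (by norm_num)) hllB
  set y : ℝ := (Real.log B)^2 with hy
  have hy16 : 16 ≤ y := by nlinarith
  -- the sum over prime factors of 1/(p-1)
  have hsplit := Finset.sum_filter_add_sum_filter_not b.primeFactors
    (fun p => p ≤ ⌊y⌋₊) (fun p => 1 / ((p:ℝ) - 1))
  -- part 1
  have hpart1 : ∑ p ∈ b.primeFactors.filter (fun p => p ≤ ⌊y⌋₊), 1 / ((p:ℝ) - 1)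
      ≤ Real.log (Real.log y) + 10 := by
    refine (Finset.sum_le_sum_of_subset_of_nonneg ?_ fun p hp _ => ?_).trans (mertens2' hy16)
    · intro p hp
      rw [Finset.mem_filter] at hp
      rw [Nat.mem_primesBelow]
      exact ⟨by omega, Nat.prime_of_mem_primeFactors hp.1⟩
    · have h2 : (2:ℝ) ≤ (p:ℝ) := by
        exact_mod_cast (Nat.prime_of_mem_primesBelow hp).two_le
      have : (0:ℝ) < (p:ℝ) - 1 := by linarith
      positivity
  -- part 2
  have homega : (2:ℝ) ^ b.primeFactors.card ≤ 2 * B := by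
    calc ((2:ℝ)) ^ b.primeFactors.card ≤ 2 * (b.totient:ℝ) := by exact_mod_cast omega_bound hb
    _ ≤ 2 * B := by linarith
  have hcardB : (b.primeFactors.card : ℝ) ≤ 2 * Real.log B := by
    have hl2 : (0.6931471803:ℝ) < Real.log 2 := Real.log_two_gt_d9
    have h1 : (b.primeFactors.card : ℝ) * Real.log 2 ≤ Real.log (2 * B) := by
      rw [← Real.log_pow]
      apply Real.log_le_log (by positivity)
      exact_mod_cast homega
    have h2 : Real.log (2 * B) = Real.log 2 + Real.log B := Real.log_mul (by norm_num) (by linarith)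
    have h3 : Real.log 2 ≤ 1 := by
      have := Real.log_le_sub_one_of_pos (show (0:ℝ) < 2 by norm_num)
      linarith
    nlinarith [(show (0:ℝ) ≤ (b.primeFactors.card : ℝ) by positivity)]
  have hpart2 : ∑ p ∈ b.primeFactors.filter (fun p => ¬ p ≤ ⌊y⌋₊), 1 / ((p:ℝ) - 1) ≤ 1 := by
    have hcard2 : ((b.primeFactors.filter (fun p => ¬ p ≤ ⌊y⌋₊)).card : ℝ)
        ≤ 2 * Real.log B := by
      have hcc : ((b.primeFactors.filter (fun p => ¬ p ≤ ⌊y⌋₊)).card : ℝ)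
          ≤ (b.primeFactors.card : ℝ) :=
        Nat.cast_le.mpr (Finset.card_le_card (Finset.filter_subset _ _))
      linarith
    have hterm : ∀ p ∈ b.primeFactors.filter (fun p => ¬ p ≤ ⌊y⌋₊),
        1 / ((p:ℝ) - 1) ≤ 1 / (y - 1) := by
      intro p hp
      rw [Finset.mem_filter] at hp
      have hpgt : ⌊y⌋₊ < p := by omega
      have hpy : y < (p:ℝ) := by
        calc y < (⌊y⌋₊:ℝ) + 1 := Nat.lt_floor_add_one y
        _ ≤ (p:ℝ) := by exact_mod_cast hpgt
      apply div_le_div_of_nonneg_left (by norm_num) (by nlinarith) (by linarith)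
    calc ∑ p ∈ b.primeFactors.filter (fun p => ¬ p ≤ ⌊y⌋₊), 1 / ((p:ℝ) - 1)
        ≤ ∑ p ∈ b.primeFactors.filter (fun p => ¬ p ≤ ⌊y⌋₊), 1 / (y - 1) :=
          Finset.sum_le_sum hterm
    _ = ((b.primeFactors.filter (fun p => ¬ p ≤ ⌊y⌋₊)).card : ℝ) * (1 / (y-1)) := by
          rw [Finset.sum_const, nsmul_eq_mul]
    _ ≤ 2 * Real.log B * (1 / (y-1)) := by
          apply mul_le_mul_of_nonneg_right hcard2
          have h0 : (0:ℝ) < y - 1 := by linarith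
          positivity
    _ ≤ 1 := by
          rw [hy]
          rw [mul_one_div, div_le_one (by nlinarith)]
          nlinarith
  -- combine
  have hsum : ∑ p ∈ b.primeFactors, 1 / ((p:ℝ) - 1) ≤ Real.log (Real.log y) + 11 := by
    rw [← hsplit]
    linarith
  have hloglogy : Real.log (Real.log y) = Real.log 2 + Real.log (Real.log (Real.log B)) := by
    rw [hy]
    rw [Real.log_pow]
    push_cast
    rw [Real.log_mul (by norm_num) (ne_of_gt (by positivity : (0:ℝ) < Real.log (Real.log B)))]
  have hsum2 : ∑ p ∈ b.primeFactors, 1 / ((p:ℝ) - 1)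
      ≤ Real.log (Real.log (Real.log B)) + 12 := by
    have hlog2le : Real.log 2 ≤ 1 := by
      have := Real.log_le_sub_one_of_pos (show (0:ℝ) < 2 by norm_num)
      linarith
    rw [hloglogy] at hsum
    linarith
  have hprodle : ∏ p ∈ b.primeFactors, ((p:ℝ) / ((p:ℝ) - 1))
      ≤ Real.exp (∑ p ∈ b.primeFactors, 1 / ((p:ℝ) - 1)) := by
    rw [Real.exp_sum]
    refine Finset.prod_le_prod (fun p hp => ?_) (fun p hp => ?_)
    · have h2 : (2:ℝ) ≤ (p:ℝ) := by exact_mod_cast (Nat.prime_of_mem_primeFactors hp).two_le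
      have h0 : (0:ℝ) < (p:ℝ) - 1 := by linarith
      positivity
    · have h2 : (2:ℝ) ≤ (p:ℝ) := by exact_mod_cast (Nat.prime_of_mem_primeFactors hp).two_le
      have h0 : (0:ℝ) < (p:ℝ) - 1 := by linarith
      have hid : (p:ℝ) / ((p:ℝ) - 1) = 1 / ((p:ℝ)-1) + 1 := by field_simp; ring
      rw [hid]
      exact Real.add_one_le_exp _
  have hexp : Real.exp (∑ p ∈ b.primeFactors, 1 / ((p:ℝ) - 1))
      ≤ Real.exp 12 * Real.log (Real.log B) := by
    calc Real.exp (∑ p ∈ b.primeFactors, 1 / ((p:ℝ) - 1))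
        ≤ Real.exp (Real.log (Real.log (Real.log B)) + 12) := Real.exp_le_exp.mpr hsum2
    _ = Real.exp 12 * Real.log (Real.log B) := by
        rw [Real.exp_add, Real.exp_log hllBpos]
        ring
  have htotpos : (0:ℝ) ≤ (b.totient : ℝ) := by positivity
  calc (b:ℝ) = b.totient * ∏ p ∈ b.primeFactors, ((p : ℝ) / ((p : ℝ) - 1)) := ratio_eq hb
  _ ≤ (b.totient:ℝ) * (Real.exp 12 * Real.log (Real.log B)) :=
      mul_le_mul_of_nonneg_left (hprodle.trans hexp) htotpos
  _ ≤ Real.exp 14 * (b.totient : ℝ) * Real.log (Real.log B) := by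
      have h1 : Real.exp 12 ≤ Real.exp 14 := Real.exp_le_exp.mpr (by norm_num)
      nlinarith [mul_nonneg (mul_nonneg (sub_nonneg.mpr h1) htotpos) hllBpos.le]
end A2Aux

open A2Aux Finset in
/-- For every fixed positive rational `r` there exists `B₀` such that for all `B ≥ B₀`,
the minor arithmetic factor satisfies `A₂(B) ≤ exp(10(2r+1)B²(log log B)²)`, i.e.
`(2r+1)·∑_{b : φ(b) ≤ B} φ(b)·∑_{p | b} (log p)/(p−1) ≤ 10(2r+1)B²(log log B)²`. -/





theorem log_A2_bound (r : ℚ) (hr : 0 < r) :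
    ∃ B₀ : ℝ, ∀ B : ℝ, B₀ ≤ B →
      (2 * (r : ℝ) + 1) *
          ∑ᶠ b ∈ PsiSet B, (Nat.totient b : ℝ) *
            ∑ p ∈ b.primeFactors, Real.log p / ((p : ℝ) - 1) ≤
        10 * (2 * (r : ℝ) + 1) * B ^ 2 * Real.log (Real.log B) ^ 2 := by
  refine ⟨Real.exp (Real.exp (Real.exp 16)), fun B hB => ?_⟩
  -- basic bounds on B
  have hx1 : ∀ x : ℝ, x + 1 ≤ Real.exp x := fun x => Real.add_one_le_exp x
  have he16 : (17:ℝ) ≤ Real.exp 16 := by nlinarith [hx1 16]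
  have hee16 : (18:ℝ) ≤ Real.exp (Real.exp 16) := by
    have := hx1 (Real.exp 16)
    linarith
  have hBpos : (0:ℝ) < B := lt_of_lt_of_le (Real.exp_pos _) hB
  have hB1 : (1:ℝ) ≤ B := le_trans (by nlinarith [hx1 (Real.exp (Real.exp 16)), hee16]) hB
  have hlogB : Real.exp (Real.exp 16) ≤ Real.log B := by
    have := Real.log_le_log (Real.exp_pos _) hB
    rwa [Real.log_exp] at this
  have hlogBpos : (0:ℝ) < Real.log B := by linarith
  set L := Real.log (Real.log B) with hL
  have hllB : Real.exp 16 ≤ L := by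
    have := Real.log_le_log (Real.exp_pos _) hlogB
    rwa [Real.log_exp] at this
  have hLpos : (0:ℝ) < L := by linarith
  have hB4 : Real.exp 4 ≤ B := by
    refine le_trans ?_ hB
    apply Real.exp_le_exp.mpr
    linarith
  -- the finite set
  set K := ⌊B⌋₊ with hK
  have hKB : (K:ℝ) ≤ B := Nat.floor_le hBpos.le
  set Ψ : Finset ℕ := (Finset.range (2*K^2+2)).filter
    (fun b => 0 < b ∧ (Nat.totient b : ℝ) ≤ B) with hΨ
  have hset : PsiSet B = ↑Ψ := by
    ext b
    simp only [PsiSet, Set.mem_setOf_eq, hΨ, Finset.coe_filter, Finset.mem_range,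
      Set.mem_setOf_eq]
    constructor
    · rintro ⟨hb0, hbB⟩
      refine ⟨?_, hb0, hbB⟩
      have h1 : (b:ℝ) ≤ 2 * (b.totient : ℝ)^2 := le_two_mul_totient_sq hb0
      have h2 : b.totient ≤ K := Nat.le_floor hbB
      have h3 : (b.totient : ℝ) ≤ (K:ℝ) := by exact_mod_cast h2
      have h4 : (b:ℝ) ≤ ((2*K^2 : ℕ) : ℝ) := by
        push_cast
        nlinarith [Nat.cast_nonneg (α := ℝ) b.totient]
      have h5 : b ≤ 2*K^2 := by exact_mod_cast h4
      omega
    · rintro ⟨_, hb0, hbB⟩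
      exact ⟨hb0, hbB⟩
  rw [hset, finsum_mem_coe_finset]
  -- key bound
  have hkey : ∑ b ∈ Ψ, (Nat.totient b : ℝ) *
      ∑ p ∈ b.primeFactors, Real.log p / ((p : ℝ) - 1) ≤ 10 * B^2 * L^2 := by
    set P := Nat.primesBelow (K+2) with hP
    have hmem : ∀ b ∈ Ψ, 0 < b ∧ (Nat.totient b : ℝ) ≤ B := by
      intro b hb
      rw [hΨ, Finset.mem_filter] at hb
      exact hb.2
    have hPF : ∀ b ∈ Ψ, b.primeFactors = P.filter (fun p => p ∣ b) := by
      intro b hb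
      obtain ⟨hb0, hbB⟩ := hmem b hb
      ext p
      rw [Finset.mem_filter, Nat.mem_primeFactors, hP, Nat.mem_primesBelow]
      constructor
      · rintro ⟨hpp, hpd, _⟩
        refine ⟨⟨?_, hpp⟩, hpd⟩
        have h1 : p.totient ∣ b.totient := Nat.totient_dvd_of_dvd hpd
        have h2 : p.totient ≤ b.totient := Nat.le_of_dvd (Nat.totient_pos.mpr hb0) h1
        rw [Nat.totient_prime hpp] at h2
        have h3 : b.totient ≤ K := Nat.le_floor hbB
        have := hpp.two_le
        omega
      · rintro ⟨⟨_, hpp⟩, hpd⟩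
        exact ⟨hpp, hpd, hb0.ne'⟩
    calc ∑ b ∈ Ψ, (Nat.totient b : ℝ) * ∑ p ∈ b.primeFactors, Real.log p / ((p : ℝ) - 1)
        = ∑ b ∈ Ψ, ∑ p ∈ P, (if p ∣ b then (Nat.totient b : ℝ) * (Real.log p / ((p : ℝ) - 1)) else 0) := by
          refine Finset.sum_congr rfl fun b hb => ?_
          rw [hPF b hb, Finset.mul_sum, Finset.sum_filter]
    _ = ∑ p ∈ P, ∑ b ∈ Ψ, (if p ∣ b then (Nat.totient b : ℝ) * (Real.log p / ((p : ℝ) - 1)) else 0) :=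
          Finset.sum_comm
    _ = ∑ p ∈ P, ∑ b ∈ Ψ.filter (fun b => p ∣ b), (Nat.totient b : ℝ) * (Real.log p / ((p : ℝ) - 1)) := by
          exact Finset.sum_congr rfl fun p _ => (Finset.sum_filter _ _).symm
    _ ≤ ∑ p ∈ P, Real.exp 14 * B^2 * L * (Real.log p / ((p:ℝ) - 1)^2) := by
          refine Finset.sum_le_sum fun p hp => ?_
          have hpp := Nat.prime_of_mem_primesBelow hp
          have hp2 : (2:ℝ) ≤ (p:ℝ) := by exact_mod_cast hpp.two_le
          have hp1 : (0:ℝ) < (p:ℝ) - 1 := by linarith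
          have hw0 : (0:ℝ) ≤ Real.log p / ((p:ℝ) - 1) := by
            apply div_nonneg (Real.log_natCast_nonneg p) hp1.le
          -- card bound
          set X := Real.exp 14 * B * L / ((p:ℝ) - 1) with hX
          have hX0 : (0:ℝ) ≤ X := by positivity
          have hcard : ((Ψ.filter (fun b => p ∣ b)).card : ℝ) ≤ X := by
            have hmaps : ∀ b ∈ Ψ.filter (fun b => p ∣ b), b / p ∈ Finset.Icc 1 ⌊X⌋₊ := by
              intro b hb
              rw [Finset.mem_filter] at hb
              obtain ⟨hbΨ, hpb⟩ := hb
              obtain ⟨hb0, hbB⟩ := hmem b hbΨ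
              have hpleb : p ≤ b := Nat.le_of_dvd hb0 hpb
              have hc1 : 1 ≤ b / p := (Nat.one_le_div_iff hpp.pos).mpr hpleb
              have hbc : b = p * (b / p) := (Nat.mul_div_cancel' hpb).symm
              have key : ∀ c : ℕ, (p-1) * c.totient ≤ (p * c).totient := by
                intro c
                by_cases hpc : p ∣ c
                · rw [Nat.totient_mul_of_prime_of_dvd hpp hpc]
                  exact Nat.mul_le_mul_right _ (by omega)
                · rw [Nat.totient_mul ((Nat.Prime.coprime_iff_not_dvd hpp).mpr hpc),
                    Nat.totient_prime hpp]
              have hφc : (p - 1) * (b/p).totient ≤ b.totient := by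
                conv_rhs => rw [hbc]
                exact key (b/p)
              have hφcR : ((b/p).totient : ℝ) * ((p:ℝ) - 1) ≤ B := by
                have hcast : ((p:ℝ) - 1) * ((b/p).totient : ℝ) ≤ (b.totient : ℝ) := by
                  have h2le : 1 ≤ p := hpp.one_lt.le
                  calc ((p:ℝ) - 1) * ((b/p).totient : ℝ)
                      = (((p-1) * (b/p).totient : ℕ) : ℝ) := by
                        push_cast [Nat.cast_sub h2le]
                        ring
                  _ ≤ (b.totient : ℝ) := by exact_mod_cast hφc
                linarith [hcast, hbB]
              have hφcB2 : ((b/p).totient : ℝ) ≤ B / ((p:ℝ) - 1) := by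
                rw [le_div_iff₀ hp1]
                exact hφcR
              have hφcB : ((b/p).totient : ℝ) ≤ B := by
                refine hφcB2.trans ?_
                apply div_le_self hBpos.le
                linarith
              have hcX : ((b/p : ℕ):ℝ) ≤ X := by
                have h6 := psi_elem_bound hB4 (by omega : 0 < b / p) hφcB
                rw [hX]
                calc ((b/p : ℕ):ℝ) ≤ Real.exp 14 * ((b/p).totient : ℝ) * L := h6
                _ ≤ Real.exp 14 * (B / ((p:ℝ) - 1)) * L :=
                      mul_le_mul_of_nonneg_right
                        (mul_le_mul_of_nonneg_left hφcB2 (Real.exp_pos 14).le) hLpos.le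
                _ = Real.exp 14 * B * L / ((p:ℝ) - 1) := by ring
              rw [Finset.mem_Icc]
              exact ⟨hc1, Nat.le_floor hcX⟩
            have hinj : ∀ b1 ∈ Ψ.filter (fun b => p ∣ b), ∀ b2 ∈ Ψ.filter (fun b => p ∣ b),
                b1 / p = b2 / p → b1 = b2 := by
              intro b1 hb1 b2 hb2 heq
              rw [Finset.mem_filter] at hb1 hb2
              have e1 : b1 = p * (b1 / p) := (Nat.mul_div_cancel' hb1.2).symm
              have e2 : b2 = p * (b2 / p) := (Nat.mul_div_cancel' hb2.2).symm
              rw [e1, e2, heq]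
            have hle := Finset.card_le_card_of_injOn _ hmaps hinj
            rw [Nat.card_Icc] at hle
            calc ((Ψ.filter (fun b => p ∣ b)).card : ℝ) ≤ ((⌊X⌋₊ + 1 - 1 : ℕ) : ℝ) := by
                  exact_mod_cast hle
            _ ≤ X := by
                  simp only [Nat.add_sub_cancel]
                  exact Nat.floor_le hX0
          have hsumφ : ∑ b ∈ Ψ.filter (fun b => p ∣ b), (Nat.totient b : ℝ)
              ≤ ((Ψ.filter (fun b => p ∣ b)).card : ℝ) * B := by
            have := Finset.sum_le_card_nsmul (Ψ.filter (fun b => p ∣ b))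
              (fun b => (Nat.totient b : ℝ)) B
              (fun b hb => (hmem b (Finset.mem_filter.mp hb).1).2)
            rwa [nsmul_eq_mul] at this
          calc ∑ b ∈ Ψ.filter (fun b => p ∣ b), (Nat.totient b : ℝ) * (Real.log p / ((p:ℝ) - 1))
              = (∑ b ∈ Ψ.filter (fun b => p ∣ b), (Nat.totient b : ℝ)) * (Real.log p / ((p:ℝ) - 1)) :=
                (Finset.sum_mul _ _ _).symm
          _ ≤ (X * B) * (Real.log p / ((p:ℝ) - 1)) := by
                apply mul_le_mul_of_nonneg_right _ hw0
                calc ∑ b ∈ Ψ.filter (fun b => p ∣ b), (Nat.totient b : ℝ)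
                    ≤ ((Ψ.filter (fun b => p ∣ b)).card : ℝ) * B := hsumφ
                _ ≤ X * B := mul_le_mul_of_nonneg_right hcard hBpos.le
          _ = Real.exp 14 * B^2 * L * (Real.log p / ((p:ℝ) - 1)^2) := by
                rw [hX]
                field_simp
    _ = Real.exp 14 * B^2 * L * ∑ p ∈ P, Real.log p / ((p:ℝ) - 1)^2 := by
          rw [Finset.mul_sum]
    _ ≤ Real.exp 14 * B^2 * L * 9 := by
          apply mul_le_mul_of_nonneg_left _ (by positivity)
          have hsub : P ⊆ Finset.Icc 2 (K+1) := by
            intro p hp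
            have hpp := Nat.prime_of_mem_primesBelow hp
            have := Nat.lt_of_mem_primesBelow hp
            rw [Finset.mem_Icc]
            exact ⟨hpp.two_le, by omega⟩
          calc ∑ p ∈ P, Real.log p / ((p:ℝ) - 1)^2
              ≤ ∑ n ∈ Finset.Icc 2 (K+1), Real.log n / ((n:ℝ) - 1)^2 := by
                refine Finset.sum_le_sum_of_subset_of_nonneg hsub fun n _ _ => ?_
                exact div_nonneg (Real.log_natCast_nonneg n) (by positivity)
          _ ≤ 9 := tail_sum_bound (K+1)
    _ ≤ 10 * B^2 * L^2 := by
          have h9 : 9 * Real.exp 14 ≤ 10 * L := by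
            have he2 : (3:ℝ) ≤ Real.exp 2 := by nlinarith [hx1 2]
            have : Real.exp 16 = Real.exp 14 * Real.exp 2 := by
              rw [← Real.exp_add]
              norm_num
            nlinarith [Real.exp_pos (14:ℝ)]
          nlinarith [sq_nonneg B, mul_nonneg (sq_nonneg B) hLpos.le,
            mul_nonneg (mul_nonneg (sq_nonneg B) hLpos.le) hLpos.le,
            mul_le_mul_of_nonneg_left h9 (mul_nonneg (sq_nonneg B) hLpos.le)]
  -- conclude
  have h2r : (0:ℝ) ≤ 2 * (r:ℝ) + 1 := by
    have : (0:ℝ) < (r:ℝ) := by exact_mod_cast hr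
    linarith
  calc (2 * (r : ℝ) + 1) * ∑ b ∈ Ψ, (Nat.totient b : ℝ) *
        ∑ p ∈ b.primeFactors, Real.log p / ((p : ℝ) - 1)
      ≤ (2 * (r : ℝ) + 1) * (10 * B^2 * L^2) := mul_le_mul_of_nonneg_left hkey h2r
  _ = 10 * (2 * (r : ℝ) + 1) * B ^ 2 * L ^ 2 := by ring
end

section
/- For every fraction a/b ∈ 𝓕_B (in lowest terms) and all integers ℓ ≥ 0 and k ≥ 0, the number d_nˡ · [tˡ](F̃_{b,a}(t−k)) is an integer, where [tˡ] denotes the coefficient of tˡ in a polynomial and d_n = lcm(1, 2, …, n). -/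
open Finset Polynomial

/-- `P_{B,den(r)} = 2·den(r)·LCM{p−1 : p prime, p ∣ b for some b ∈ Ψ}`. -/
def Pconst (Psi : Finset ℕ) (r : ℚ) : ℕ :=
  2 * r.den * (Psi.biUnion Nat.primeFactors).lcm (fun p => p - 1)

/-- `d_n = lcm(1, 2, …, n)`. -/
def dlcm (n : ℕ) : ℕ := (Finset.Icc 1 n).lcm id

/-- The polynomial `F_{b,a}(t) = ((∏_{p ∣ b} p^{(2r+1)n/(p−1)}) / ((n/den(r))!)^{den(r)(2r+1)})
· ∏_{j=0}^{(2r+1)n−1} (b·t − b·r·n + a + b·j)`.  Here, assuming `P_{B,den(r)} ∣ n`, the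
quantities `(2r+1)n = 2·num(r)·(n/den(r)) + n`, `n/den(r)`, `(2r+1)n/(p−1)` and
`den(r)(2r+1) = 2·num(r) + den(r)` are the indicated natural numbers (all the divisions
are exact). -/
noncomputable def Fpoly (r : ℚ) (n : ℕ) (b a : ℕ) : Polynomial ℚ :=
  Polynomial.C
      ((∏ p ∈ b.primeFactors, (p : ℚ) ^ ((2 * (r.num.toNat * (n / r.den)) + n) / (p - 1))) /
        (((n / r.den).factorial : ℚ)) ^ (2 * r.num.toNat + r.den)) *
    ∏ j ∈ Finset.range (2 * (r.num.toNat * (n / r.den)) + n),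
      (Polynomial.C (b : ℚ) * Polynomial.X +
        Polynomial.C ((a : ℚ) - (b : ℚ) * (r * n) + (b : ℚ) * j))

/-- `F̃_{b,a} = F_{b,a}` if `a/b ≠ 1`, and `F̃_{1,1}(t) = (t − rn)·F_{1,1}(t)`. -/
noncomputable def Ftilde (r : ℚ) (n : ℕ) (b a : ℕ) : Polynomial ℚ :=
  if (a : ℚ) / b = 1 then (Polynomial.X - Polynomial.C (r * n)) * Fpoly r n b a
  else Fpoly r n b a

/- auxiliary lemmas -/

/-- Counting multiples of `q` in an AP with difference coprime to `q`. -/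
lemma count_ap (N q : ℕ) (hq : 0 < q) (b c : ℤ) (hb : IsCoprime b (q : ℤ)) :
    N / q ≤ ((Finset.range N).filter (fun j : ℕ => (q : ℤ) ∣ c + b * j)).card := by
  obtain ⟨u, v, huv⟩ := hb
  set j0 : ℤ := (-c * u) % q with hj0
  have hj0nonneg : 0 ≤ j0 := Int.emod_nonneg _ (by exact_mod_cast hq.ne')
  have hj0lt : j0 < q := Int.emod_lt_of_pos _ (by exact_mod_cast hq)
  obtain ⟨t, ht⟩ : (q : ℤ) ∣ (-c * u - j0) := Int.dvd_self_sub_of_emod_eq rfl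
  have key : ∀ i : ℕ, (q : ℤ) ∣ c + b * (j0 + q * i) := by
    intro i
    exact ⟨c * v - b * t + b * i, by linear_combination (-b) * ht + (-c) * huv⟩
  have hj0q : j0.toNat < q := by omega
  have hj0eq : (j0.toNat : ℤ) = j0 := Int.toNat_of_nonneg hj0nonneg
  calc N / q = (Finset.range (N / q)).card := by simp
    _ ≤ _ := by
        apply Finset.card_le_card_of_injOn (fun i => j0.toNat + q * i)
        · intro i hi
          simp only [Finset.mem_coe, Finset.mem_range] at hi
          simp only [Finset.mem_coe, Finset.mem_filter, Finset.mem_range]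
          constructor
          · have h1 : q * (i + 1) ≤ q * (N / q) := Nat.mul_le_mul_left q hi
            rw [Nat.mul_succ] at h1
            have h2 : q * (N / q) ≤ N := by
              rw [mul_comm]; exact Nat.div_mul_le_self N q
            omega
          · have h3 := key i
            push_cast
            rw [hj0eq]
            exact h3
        · intro x _ y _ h
          simp only at h
          have : q * x = q * y := by omega
          exact Nat.eq_of_mul_eq_mul_left hq this

lemma dlcm_ne_zero (n : ℕ) : dlcm n ≠ 0 := by
  intro h
  rw [dlcm, Finset.lcm_eq_zero_iff] at h
  obtain ⟨x, hx, hx0⟩ := h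
  simp only [Finset.mem_coe, Finset.mem_Icc, id_eq] at hx hx0
  omega

lemma dvd_dlcm {n k : ℕ} (h1 : 1 ≤ k) (h2 : k ≤ n) : k ∣ dlcm n :=
  Finset.dvd_lcm (by simp [Finset.mem_Icc]; omega)

lemma log_le_factorization_dlcm {p n : ℕ} (hp : p.Prime) (hn : 0 < n) :
    Nat.log p n ≤ (dlcm n).factorization p := by
  rw [← Nat.Prime.pow_dvd_iff_le_factorization hp (dlcm_ne_zero n)]
  exact dvd_dlcm (Nat.one_le_pow _ _ hp.pos) (Nat.pow_log_le_self p hn.ne')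
lemma core_dvd (n m K ℓ : ℕ) (hn : 0 < n) (hm : 0 < m) (hmn : m ≤ n) (hK : 0 < K)
    (b : ℕ) (hb : 0 < b) (a : ℕ) (ha : 0 < a) (hcop : Nat.Coprime a b)
    (hpm : ∀ p ∈ b.primeFactors, (p - 1) ∣ m)
    (c : ℤ) (hc : (b : ℤ) ∣ (c - a))
    (T : Finset ℕ) (hT : T ⊆ Finset.range (K * m)) (hcard : K * m ≤ T.card + ℓ) :
    ((m.factorial : ℤ)) ^ K ∣
      (dlcm n : ℤ) ^ ℓ * (∏ p ∈ b.primeFactors, (p : ℤ) ^ ((K * m) / (p - 1))) * (b : ℤ) ^ ℓ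
        * ∏ j ∈ T, (c + (b : ℤ) * j) := by
  rcases eq_or_ne (∏ j ∈ T, (c + (b : ℤ) * j)) 0 with h0 | h0
  · rw [h0, mul_zero]; exact dvd_zero _
  have hw : ∀ j ∈ T, c + (b : ℤ) * j ≠ 0 := fun j hj => by
    intro h; exact h0 (Finset.prod_eq_zero hj h)
  -- pass to natAbs
  set Pn : ℕ := ∏ p ∈ b.primeFactors, p ^ ((K * m) / (p - 1)) with hPn
  set W : ℕ := ∏ j ∈ T, (c + (b : ℤ) * j).natAbs with hW
  have hWabs : ((∏ j ∈ T, (c + (b : ℤ) * j)).natAbs) = W := map_prod Int.natAbsHom _ T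
  have hWne : W ≠ 0 := by
    rw [← hWabs]; simpa using h0
  have hPnne : Pn ≠ 0 := by
    rw [hPn]
    exact Finset.prod_ne_zero_iff.mpr fun p hp =>
      pow_ne_zero _ (Nat.Prime.ne_zero (Nat.prime_of_mem_primeFactors hp))
  have hD : dlcm n ^ ℓ * Pn * b ^ ℓ * W ≠ 0 :=
    mul_ne_zero (mul_ne_zero (mul_ne_zero (pow_ne_zero _ (dlcm_ne_zero n)) hPnne)
      (pow_ne_zero _ hb.ne')) hWne
  have key : m.factorial ^ K ∣ dlcm n ^ ℓ * Pn * b ^ ℓ * W := by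
    rw [← Nat.factorization_le_iff_dvd (pow_ne_zero _ m.factorial_ne_zero) hD, Finsupp.le_def]
    intro p
    by_cases hp : p.Prime
    swap
    · simp [Nat.factorization_eq_zero_of_not_prime _ hp]
    haveI : Fact p.Prime := ⟨hp⟩
    rw [Nat.factorization_pow, Nat.factorization_mul (mul_ne_zero (mul_ne_zero
        (pow_ne_zero _ (dlcm_ne_zero n)) hPnne) (pow_ne_zero _ hb.ne')) hWne,
      Nat.factorization_mul (mul_ne_zero (pow_ne_zero _ (dlcm_ne_zero n)) hPnne)
        (pow_ne_zero ℓ hb.ne' : b ^ ℓ ≠ 0),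
      Nat.factorization_mul (pow_ne_zero _ (dlcm_ne_zero n)) hPnne,
      Nat.factorization_pow, Nat.factorization_pow]
    simp only [Finsupp.coe_add, Finsupp.coe_smul, Pi.add_apply, Pi.smul_apply, smul_eq_mul]
    by_cases hpb : p ∣ b
    · -- `p ∣ b`: the prime powers `Pn` absorb everything
      have hpmem : p ∈ b.primeFactors := Nat.mem_primeFactors.mpr ⟨hp, hpb, hb.ne'⟩
      have h1 : p ^ ((K * m) / (p - 1)) ∣ Pn := Finset.dvd_prod_of_mem _ hpmem
      have h2 : (K * m) / (p - 1) ≤ Pn.factorization p :=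
        (Nat.Prime.pow_dvd_iff_le_factorization hp hPnne).mp h1
      have h3 : (p - 1) * ((m.factorial).factorization p) ≤ m := by
        rw [Nat.factorization_def _ hp]
        calc (p - 1) * padicValNat p m.factorial = m - (p.digits m).sum :=
              sub_one_mul_padicValNat_factorial m
          _ ≤ m := Nat.sub_le _ _
      have hp1 : 0 < p - 1 := by have := hp.two_le; omega
      have h4 : (m.factorial).factorization p ≤ m / (p - 1) :=
        Nat.le_div_iff_mul_le hp1 |>.mpr (by rw [mul_comm]; exact h3)
      have h5 : K * (m / (p - 1)) = (K * m) / (p - 1) :=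
        (Nat.mul_div_assoc K (hpm p hpmem)).symm
      calc K * (m.factorial).factorization p ≤ K * (m / (p - 1)) :=
            Nat.mul_le_mul_left K h4
        _ = (K * m) / (p - 1) := h5
        _ ≤ Pn.factorization p := h2
        _ ≤ _ := by omega
    · -- `p ∤ b`: counting in the arithmetic progression
      set S := Nat.log p m with hS
      set N := K * m with hN
      have hvfact : (m.factorial).factorization p = ∑ s ∈ Finset.Ico 1 (S + 1), m / p ^ s := by
        rw [Nat.factorization_def _ hp]
        exact padicValNat_factorial (Nat.lt_succ_self _)
      -- count in T at each level
      have hcnt : ∀ s ∈ Finset.Ico 1 (S + 1),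
          K * (m / p ^ s) ≤ (T.filter (fun j : ℕ => ((p : ℤ) ^ s) ∣ c + b * j)).card + ℓ := by
        intro s hs
        have hq : 0 < p ^ s := pow_pos hp.pos s
        have hcop2 : IsCoprime (b : ℤ) ((p ^ s : ℕ) : ℤ) := by
          rw [Nat.isCoprime_iff_coprime]
          exact (Nat.Coprime.pow_right s ((Nat.Prime.coprime_iff_not_dvd hp).mpr hpb).symm)
        have h1 := count_ap N (p ^ s) hq b c hcop2
        push_cast at h1
        have h2 : K * (m / p ^ s) ≤ N / p ^ s := by
          rw [hN]; exact Nat.mul_div_le_mul_div_assoc K m (p ^ s)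
        -- range-filter vs T-filter
        have h3 : (Finset.range N).filter (fun j : ℕ => ((p : ℤ) ^ s) ∣ c + b * j) ⊆
            (T.filter (fun j : ℕ => ((p : ℤ) ^ s) ∣ c + b * j)) ∪ (Finset.range N \ T) := by
          intro j hj
          simp only [Finset.mem_filter, Finset.mem_union, Finset.mem_sdiff] at hj ⊢
          by_cases hjT : j ∈ T
          · exact Or.inl ⟨hjT, hj.2⟩
          · exact Or.inr ⟨hj.1, hjT⟩
        have h4 : (Finset.range N \ T).card ≤ ℓ := by
          rw [Finset.card_sdiff_of_subset hT, Finset.card_range]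
          omega
        have h5 := Finset.card_le_card h3
        have h6 := Finset.card_union_le
          (T.filter (fun j : ℕ => ((p : ℤ) ^ s) ∣ c + b * j)) (Finset.range N \ T)
        omega
      -- double counting
      have hdouble : ∑ s ∈ Finset.Ico 1 (S + 1),
          (T.filter (fun j : ℕ => ((p : ℤ) ^ s) ∣ c + b * j)).card ≤ W.factorization p := by
        have hWfact : W.factorization p = ∑ j ∈ T, ((c + (b:ℤ) * j).natAbs).factorization p := by
          rw [hW, Nat.factorization_prod (fun j hj => Int.natAbs_ne_zero.mpr (hw j hj))]
          simp
        rw [hWfact]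
        simp only [Finset.card_filter]
        rw [Finset.sum_comm]
        apply Finset.sum_le_sum
        intro j hj
        have hjabs : ((c + (b:ℤ) * j).natAbs) ≠ 0 := Int.natAbs_ne_zero.mpr (hw j hj)
        calc ∑ s ∈ Finset.Ico 1 (S + 1), (if ((p : ℤ) ^ s) ∣ c + b * j then 1 else 0)
            = ((Finset.Ico 1 (S + 1)).filter (fun s => ((p : ℤ) ^ s) ∣ c + b * j)).card := by
              rw [Finset.card_filter]
          _ ≤ ((c + (b:ℤ) * j).natAbs).factorization p := by
              have hsub : (Finset.Ico 1 (S + 1)).filter (fun s => ((p : ℤ) ^ s) ∣ c + b * j) ⊆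
                  Finset.Icc 1 (((c + (b:ℤ) * j).natAbs).factorization p) := by
                intro s hs
                simp only [Finset.mem_filter, Finset.mem_Ico] at hs
                simp only [Finset.mem_Icc]
                refine ⟨hs.1.1, ?_⟩
                rw [← Nat.Prime.pow_dvd_iff_le_factorization hp hjabs]
                rw [← Int.natCast_dvd]
                push_cast
                exact hs.2
              calc _ ≤ (Finset.Icc 1 (((c + (b:ℤ) * j).natAbs).factorization p)).card :=
                    Finset.card_le_card hsub
                _ = _ := by rw [Nat.card_Icc]; omega
          _ = _ := rfl
      -- sum up
      have h7 : K * (m.factorial).factorization p ≤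
          (∑ s ∈ Finset.Ico 1 (S + 1),
            (T.filter (fun j : ℕ => ((p : ℤ) ^ s) ∣ c + b * j)).card) + S * ℓ := by
        rw [hvfact, Finset.mul_sum]
        calc ∑ s ∈ Finset.Ico 1 (S + 1), K * (m / p ^ s)
            ≤ ∑ s ∈ Finset.Ico 1 (S + 1),
              ((T.filter (fun j : ℕ => ((p : ℤ) ^ s) ∣ c + b * j)).card + ℓ) :=
              Finset.sum_le_sum hcnt
          _ = _ := by
              rw [Finset.sum_add_distrib, Finset.sum_const, Nat.card_Ico, smul_eq_mul,
                Nat.add_sub_cancel]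
      have h8 : S ≤ (dlcm n).factorization p :=
        le_trans (Nat.log_mono_right hmn) (log_le_factorization_dlcm hp hn)
      have h9 : S * ℓ ≤ ℓ * (dlcm n).factorization p := by
        rw [mul_comm]; exact Nat.mul_le_mul_left ℓ h8
      omega
  -- conclude in ℤ
  have hPcast : (∏ p ∈ b.primeFactors, (p : ℤ) ^ ((K * m) / (p - 1))) = ((Pn : ℕ) : ℤ) := by
    rw [hPn]; push_cast; rfl
  rw [hPcast, ← Nat.cast_pow, Int.natCast_dvd]
  have habs : ((dlcm n : ℤ) ^ ℓ * ((Pn : ℕ) : ℤ) * (b : ℤ) ^ ℓ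
      * ∏ j ∈ T, (c + (b : ℤ) * j)).natAbs = dlcm n ^ ℓ * Pn * b ^ ℓ * W := by
    rw [Int.natAbs_mul, Int.natAbs_mul, Int.natAbs_mul, Int.natAbs_pow, Int.natAbs_pow, hWabs]
    simp
  rw [habs]
  exact key

lemma Fpoly_coeff_int (r : ℚ) (hr : 0 < r) (n : ℕ) (hn : 0 < n)
    (hden : r.den ∣ n)
    (b a : ℕ) (hb : 0 < b) (ha : 0 < a) (hcop : Nat.Coprime a b)
    (hpm : ∀ p ∈ b.primeFactors, (p - 1) ∣ (n / r.den))
    (ℓ k : ℕ) :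
    ∃ z : ℤ, (dlcm n : ℚ) ^ ℓ *
      ((Fpoly r n b a).comp (Polynomial.X - Polynomial.C (k : ℚ))).coeff ℓ = z := by
  set m : ℕ := n / r.den with hm
  set Nu : ℕ := r.num.toNat with hNu
  set N : ℕ := 2 * (Nu * m) + n with hN
  set K : ℕ := 2 * Nu + r.den with hK
  set R : ℕ := Nu * m with hR
  have hbQ : (b : ℚ) ≠ 0 := Nat.cast_ne_zero.mpr hb.ne'
  have hnm : n = r.den * m := by rw [hm, Nat.mul_div_cancel' hden]
  have hm0 : 0 < m := by
    rcases Nat.eq_zero_or_pos m with h | h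
    · rw [h, mul_zero] at hnm; omega
    · exact h
  have hmn : m ≤ n := Nat.div_le_self n r.den
  have hNKm : N = K * m := by rw [hN, hK, hR, hnm]; ring
  have hK0 : 0 < K := by have := r.den_pos ; omega
  have hnumeq : ((Nu : ℤ) : ℚ) = (r.num : ℚ) := by
    rw [hNu]; exact_mod_cast congrArg (Int.cast : ℤ → ℚ) (Int.toNat_of_nonneg (Rat.num_pos.mpr hr).le)
  have hrn : r * (n : ℚ) = (R : ℚ) := by
    have h1 : r * (r.den : ℚ) = (r.num : ℚ) := Rat.mul_den_eq_num r
    rw [hnm, hR]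
    push_cast
    rw [← mul_assoc, h1, ← hnumeq]
    push_cast
    ring
  -- the integer values
  set c : ℤ := (a : ℤ) - b * R - b * k with hc
  -- rewrite Fpoly
  set cst : ℚ := (∏ p ∈ b.primeFactors, (p : ℚ) ^ (N / (p - 1))) /
      ((m.factorial : ℚ)) ^ K with hcst
  have hFpoly : Fpoly r n b a = Polynomial.C cst *
      ∏ j ∈ Finset.range N,
        (Polynomial.C (b : ℚ) * Polynomial.X + Polynomial.C ((a : ℚ) - b * R + b * j)) := by
    rw [Fpoly, hrn]
  -- composition
  have hcomp : (Fpoly r n b a).comp (Polynomial.X - Polynomial.C (k : ℚ)) =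
      Polynomial.C (cst * (b : ℚ) ^ N) *
        ∏ j ∈ Finset.range N, (Polynomial.X + Polynomial.C (((c + b * j : ℤ) : ℚ) / b)) := by
    rw [hFpoly, mul_comp, C_comp, Polynomial.prod_comp]
    rw [C_mul, mul_assoc]
    congr 1
    rw [C_pow]
    calc ∏ j ∈ Finset.range N,
          (Polynomial.C (b:ℚ) * Polynomial.X + Polynomial.C ((a : ℚ) - b * R + b * j)).comp
            (Polynomial.X - Polynomial.C (k : ℚ))
        = ∏ j ∈ Finset.range N,
            (Polynomial.C (b:ℚ) * (Polynomial.X + Polynomial.C (((c + b * j : ℤ) : ℚ) / b))) := by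
          apply Finset.prod_congr rfl
          intro j _
          rw [add_comp, mul_comp, C_comp, C_comp, X_comp]
          rw [mul_add, ← C_mul, mul_div_cancel₀ _ hbQ]
          push_cast [hc]
          simp only [C_add, C_sub, C_mul]
          ring
      _ = _ := by rw [Finset.prod_mul_distrib, Finset.prod_const, Finset.card_range]
  by_cases hℓN : N < ℓ
  · refine ⟨0, ?_⟩
    have hdeg : ((Fpoly r n b a).comp (Polynomial.X - Polynomial.C (k : ℚ))).natDegree < ℓ := by
      calc ((Fpoly r n b a).comp (Polynomial.X - Polynomial.C (k : ℚ))).natDegree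
          ≤ (Fpoly r n b a).natDegree * (Polynomial.X - Polynomial.C (k : ℚ)).natDegree :=
            natDegree_comp_le
        _ ≤ (Fpoly r n b a).natDegree := by rw [natDegree_X_sub_C]; omega
        _ ≤ N := by
            rw [hFpoly]
            refine le_trans (natDegree_mul_le) ?_
            simp only [natDegree_C, zero_add]
            refine le_trans (natDegree_prod_le _ _) ?_
            refine le_trans (Finset.sum_le_sum (g := fun _ => 1)
              (fun j _ => natDegree_linear_le)) (by simp)
        _ < ℓ := hℓN
    rw [coeff_eq_zero_of_natDegree_lt hdeg]
    simp
  push_neg at hℓN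
  -- main case
  refine ⟨∑ T ∈ (Finset.range N).powersetCard (N - ℓ),
    ((dlcm n : ℤ) ^ ℓ * (∏ p ∈ b.primeFactors, (p : ℤ) ^ (N / (p - 1))) * (b : ℤ) ^ ℓ
        * ∏ j ∈ T, (c + (b : ℤ) * j)) / ((m.factorial : ℤ)) ^ K, ?_⟩
  rw [hcomp, coeff_C_mul]
  rw [Finset.prod_X_add_C_coeff (Finset.range N) _ (by simpa using hℓN), Finset.card_range]
  push_cast
  rw [Finset.mul_sum, Finset.mul_sum]
  apply Finset.sum_congr rfl
  intro T hT
  obtain ⟨hTsub, hTcard⟩ := Finset.mem_powersetCard.mp hT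
  have hdvd : ((m.factorial : ℤ)) ^ K ∣ (dlcm n : ℤ) ^ ℓ * (∏ p ∈ b.primeFactors, (p : ℤ) ^ (N / (p - 1))) * (b : ℤ) ^ ℓ
        * ∏ j ∈ T, (c + (b : ℤ) * j) := by
    rw [hNKm]
    exact core_dvd n m K ℓ hn hm0 hmn hK0 b hb a ha hcop hpm c
      (by rw [hc]; push_cast; exact ⟨-((R : ℤ) + k), by ring⟩) T (by rwa [← hNKm])
      (by rw [← hNKm]; omega)
  rw [Int.cast_div_charZero hdvd]
  push_cast
  rw [Finset.prod_div_distrib, Finset.prod_const, hTcard]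
  rw [hcst]
  have hbpow : (b : ℚ) ^ N = (b : ℚ) ^ (N - ℓ) * (b : ℚ) ^ ℓ := by
    rw [← pow_add]; congr 1; omega
  rw [hbpow]
  field_simp

/-- For every fraction `a/b ∈ 𝓕_B` in lowest terms and all `ℓ, k ≥ 0`, the number
`d_nˡ · [tˡ](F̃_{b,a}(t−k))` is an integer. -/
theorem dlcm_pow_mul_coeff_Ftilde_isInt
    (B : ℝ) (hB : 0 < B) (r : ℚ) (hr : 0 < r)
    (Psi : Finset ℕ) (hPsi : ∀ b : ℕ, b ∈ Psi ↔ 0 < b ∧ (Nat.totient b : ℝ) ≤ B)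
    (n : ℕ) (hn : 0 < n) (hPn : Pconst Psi r ∣ n)
    (b a : ℕ) (hbPsi : b ∈ Psi) (ha1 : 1 ≤ a) (hab : a ≤ b) (hcop : Nat.Coprime a b)
    (ℓ k : ℕ) :
    ∃ z : ℤ, ((dlcm n : ℚ)) ^ ℓ *
        ((Ftilde r n b a).comp (Polynomial.X - Polynomial.C (k : ℚ))).coeff ℓ = z := by
  have hb : 0 < b := ((hPsi b).mp hbPsi).1
  obtain ⟨q, hq⟩ := hPn
  have hq' : n = 2 * r.den * ((Psi.biUnion Nat.primeFactors).lcm (fun p => p - 1)) * q := by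
    rw [hq, Pconst]
  set L : ℕ := (Psi.biUnion Nat.primeFactors).lcm (fun p => p - 1) with hL
  have hden : r.den ∣ n := ⟨2 * L * q, by rw [hq']; ring⟩
  have hmval : n / r.den = 2 * L * q := by
    rw [hq', show 2 * r.den * L * q = r.den * (2 * L * q) by ring]
    exact Nat.mul_div_cancel_left _ r.pos
  have hpm : ∀ p ∈ b.primeFactors, (p - 1) ∣ (n / r.den) := by
    intro p hp
    have h1 : p ∈ Psi.biUnion Nat.primeFactors := Finset.mem_biUnion.mpr ⟨b, hbPsi, hp⟩
    have h2 : (p - 1) ∣ L := Finset.dvd_lcm h1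
    rw [hmval]
    exact h2.trans ⟨2 * q, by ring⟩
  have key := Fpoly_coeff_int r hr n hn hden b a hb ha1 hcop hpm
  set R : ℕ := r.num.toNat * (n / r.den) with hR
  have hnum : ((r.num.toNat : ℤ) : ℚ) = (r.num : ℚ) := by
    exact_mod_cast congrArg (Int.cast : ℤ → ℚ) (Int.toNat_of_nonneg (Rat.num_pos.mpr hr).le)
  have hrn : r * (n : ℚ) = (R : ℚ) := by
    have h2 : (n : ℚ) = (r.den : ℚ) * ((n / r.den : ℕ) : ℚ) := by
      exact_mod_cast (Nat.mul_div_cancel' hden).symm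
    rw [h2, ← mul_assoc, Rat.mul_den_eq_num, hR]
    push_cast [← hnum]
    ring
  rw [Ftilde]
  by_cases hab1 : (a : ℚ) / b = 1
  · rw [if_pos hab1, mul_comp, sub_comp, X_comp, C_comp]
    have hXC : (Polynomial.X - Polynomial.C (k : ℚ)) - Polynomial.C (r * n) =
        Polynomial.X - Polynomial.C ((k : ℚ) + (R : ℚ)) := by
      rw [hrn, C_add]
      ring
    rw [hXC]
    cases ℓ with
    | zero =>
      obtain ⟨z0, hz0⟩ := key 0 k
      refine ⟨-((k : ℤ) + (R : ℤ)) * z0, ?_⟩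
      rw [Polynomial.mul_coeff_zero]
      simp only [coeff_sub, coeff_X_zero, coeff_C_zero, pow_zero, one_mul] at hz0 ⊢
      rw [hz0]
      push_cast
      ring
    | succ t =>
      obtain ⟨z1, hz1⟩ := key t k
      obtain ⟨z2, hz2⟩ := key (t + 1) k
      refine ⟨(dlcm n : ℤ) * z1 - ((k : ℤ) + (R : ℤ)) * z2, ?_⟩
      rw [sub_mul, coeff_sub, coeff_X_mul, coeff_C_mul]
      push_cast
      linear_combination (dlcm n : ℚ) * hz1 - ((k : ℚ) + (R : ℚ)) * hz2
  · rw [if_neg hab1]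
    exact key ℓ k
end

section
/- For every θ ∈ 𝓕_B, the series r_{n,θ} = ∑_{m=1}^{∞} R_n(m+θ) converges and satisfies r_{n,θ} = ρ_{0,θ} + ∑_{3 ≤ i ≤ s, i odd} ρ_i·ζ(i,θ), where ζ(i,θ) = ∑_{m=0}^{∞} 1/(m+θ)ⁱ is the Hurwitz zeta value; in particular the rational coefficients ρ_i do not depend on θ. -/
open Finset Filter Real Topology

noncomputable section

/-- The zero set `𝓕_B`: rationals `a/b` with `b ∈ Ψ`, `1 ≤ a ≤ b`, `gcd(a,b)=1`. -/
def zeroSet (Psi : Finset ℕ) : Finset ℚ :=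
  Psi.biUnion fun b =>
    ((Finset.Icc 1 b).filter fun a => Nat.Coprime a b).image fun a : ℕ => (a : ℚ) / b

/-- The major arithmetic factor `A₁(B) = ∏_{b ∈ Ψ} b^{(2r+1)φ(b)}`. -/
def A1 (Psi : Finset ℕ) (r : ℚ) : ℝ :=
  ∏ b ∈ Psi, (b : ℝ) ^ ((2 * (r : ℝ) + 1) * (Nat.totient b : ℝ))

/-- The minor arithmetic factor `A₂(B) = ∏_{b ∈ Ψ} ∏_{p ∣ b} p^{(2r+1)φ(b)/(p−1)}`. -/
def A2 (Psi : Finset ℕ) (r : ℚ) : ℝ :=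
  ∏ b ∈ Psi, ∏ p ∈ b.primeFactors,
    (p : ℝ) ^ ((2 * (r : ℝ) + 1) * (Nat.totient b : ℝ) / ((p : ℝ) - 1))

/-- The auxiliary rational function
`R_n(t) = A₁ⁿA₂ⁿ · (n!^{s+1}/((n/den(r))!)^{den(r)(2r+1)|𝓕_B|}) · (t−rn)·
∏_{θ∈𝓕_B}∏_{j=0}^{(2r+1)n−1}(t−rn+j+θ) / ∏_{j=0}^{n}(t+j)^{s+1}`.  Here, assuming
`P_{B,den(r)} ∣ n`, `(2r+1)n = 2·num(r)·(n/den(r)) + n` and `den(r)(2r+1) = 2·num(r)+den(r)`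
are the indicated natural numbers (the divisions are exact). -/
def Rfun (Psi : Finset ℕ) (r : ℚ) (s n : ℕ) (t : ℝ) : ℝ :=
  A1 Psi r ^ n * A2 Psi r ^ n *
    ((n.factorial : ℝ) ^ (s + 1) /
      (((n / r.den).factorial : ℝ)) ^ ((2 * r.num.toNat + r.den) * (zeroSet Psi).card)) *
    ((t - (r : ℝ) * n) *
      ∏ θ ∈ zeroSet Psi, ∏ j ∈ Finset.range (2 * (r.num.toNat * (n / r.den)) + n),
        (t - (r : ℝ) * n + (j : ℝ) + (θ : ℝ))) /
    ∏ j ∈ Finset.range (n + 1), (t + (j : ℝ)) ^ (s + 1)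


/-- The Hurwitz zeta value `ζ(i,α) = ∑_{m=0}^{∞} 1/(m+α)ⁱ`. -/
def hurwitzZetaValue (i : ℕ) (α : ℝ) : ℝ := ∑' m : ℕ, 1 / ((m : ℝ) + α) ^ i


lemma uniq_ext (s n : ℕ) (d : ℕ → ℕ → ℝ)
    (h : ∀ t : ℝ, 0 < t → ∑ i ∈ Finset.Icc 1 s, ∑ k ∈ Finset.range (n+1), d i k / (t+(k:ℝ))^i = 0) :
    ∀ t : ℝ, (∀ k ∈ Finset.range (n+1), t + (k:ℝ) ≠ 0) →
      ∑ i ∈ Finset.Icc 1 s, ∑ k ∈ Finset.range (n+1), d i k / (t+(k:ℝ))^i = 0 := by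
  set p : Polynomial ℝ := ∑ i ∈ Finset.Icc 1 s, ∑ k ∈ Finset.range (n+1),
    Polynomial.C (d i k) * (Polynomial.X + Polynomial.C (k:ℝ))^(s-i) *
      ∏ k' ∈ (Finset.range (n+1)).erase k, (Polynomial.X + Polynomial.C (k':ℝ))^s with hp
  have hev : ∀ t : ℝ, (∀ k ∈ Finset.range (n+1), t + (k:ℝ) ≠ 0) →
      p.eval t = (∑ i ∈ Finset.Icc 1 s, ∑ k ∈ Finset.range (n+1), d i k / (t+(k:ℝ))^i)
        * ∏ k ∈ Finset.range (n+1), (t+(k:ℝ))^s := by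
    intro t ht
    rw [hp, Finset.sum_mul]
    rw [Polynomial.eval_finset_sum]
    refine Finset.sum_congr rfl ?_
    intro i hi
    rw [Polynomial.eval_finset_sum, Finset.sum_mul]
    refine Finset.sum_congr rfl ?_
    intro k hk
    rw [Polynomial.eval_mul, Polynomial.eval_mul, Polynomial.eval_prod]
    simp only [Polynomial.eval_pow, Polynomial.eval_add, Polynomial.eval_X, Polynomial.eval_C]
    rw [← Finset.mul_prod_erase _ _ hk]
    have hik : i ≤ s := (Finset.mem_Icc.mp hi).2
    have h0 : t + (k:ℝ) ≠ 0 := ht k hk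
    rw [pow_sub₀ _ h0 hik]
    have : ∀ k' ∈ (Finset.range (n+1)).erase k, t + (k':ℝ) ≠ 0 := fun k' hk' =>
      ht k' (Finset.mem_of_mem_erase hk')
    field_simp
  have hroots : p = 0 := by
    apply Polynomial.eq_zero_of_infinite_isRoot
    apply Set.Infinite.mono _ (Set.Ioi_infinite (0:ℝ))
    intro t ht
    have h0 : ∀ k ∈ Finset.range (n+1), t + (k:ℝ) ≠ 0 := by
      intro k hk
      have h0t : (0:ℝ) < t := ht
      positivity
    simp only [Set.mem_setOf_eq, Polynomial.IsRoot, hev t h0, h t ht, zero_mul]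
  intro t ht
  have h1 : p.eval t = 0 := by rw [hroots]; simp
  have h2 := hev t ht
  have h3 : ∏ k ∈ Finset.range (n+1), (t+(k:ℝ))^s ≠ 0 :=
    Finset.prod_ne_zero_iff.mpr (fun k hk => pow_ne_zero _ (ht k hk))
  rcases mul_eq_zero.mp (h2 ▸ h1) with h4 | h4
  · exact h4
  · exact absurd h4 h3

lemma uniq (s n : ℕ) (d : ℕ → ℕ → ℝ)
    (h : ∀ t : ℝ, 0 < t → ∑ i ∈ Finset.Icc 1 s, ∑ k ∈ Finset.range (n+1), d i k / (t+(k:ℝ))^i = 0) :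
    ∀ i ∈ Finset.Icc 1 s, ∀ k ∈ Finset.range (n+1), d i k = 0 := by
  have h' := uniq_ext s n d h
  have core : ∀ k₀ ∈ Finset.range (n+1), ∀ i₀ ∈ Finset.Icc 1 s,
      (∀ i', i₀ < i' → i' ≤ s → d i' k₀ = 0) → d i₀ k₀ = 0 := by
    intro k₀ hk₀ i₀ hi₀ hz
    have hi₀1 : 1 ≤ i₀ := (Finset.mem_Icc.mp hi₀).1
    have hi₀s : i₀ ≤ s := (Finset.mem_Icc.mp hi₀).2
    set L : ℕ → ℕ → ℝ := fun i k => if i = i₀ ∧ k = k₀ then d i₀ k₀ else 0 with hL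
    set Φ : ℝ → ℝ := fun u => ∑ i ∈ Finset.Icc 1 s, ∑ k ∈ Finset.range (n+1),
      u^i₀ * (d i k / ((-(k₀:ℝ)+u) + (k:ℝ))^i) with hΦ
    -- Φ is eventually 0
    have hΦ0 : ∀ᶠ u in 𝓝[>] (0:ℝ), Φ u = 0 := by
      filter_upwards [Ioo_mem_nhdsGT (zero_lt_one (α := ℝ))] with u hu
      have hpoles : ∀ k ∈ Finset.range (n+1), (-(k₀:ℝ)+u) + (k:ℝ) ≠ 0 := by
        intro k hk
        rcases lt_trichotomy k k₀ with hlt | heq | hgt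
        · have h1 : (k:ℝ) + 1 ≤ (k₀:ℝ) := by exact_mod_cast hlt
          have : -(k₀:ℝ) + u + k < 0 := by linarith [hu.2]
          exact ne_of_lt this
        · subst heq
          have : -(k:ℝ) + u + k = u := by ring
          rw [this]; exact ne_of_gt hu.1
        · have h1 : (k₀:ℝ) + 1 ≤ (k:ℝ) := by exact_mod_cast hgt
          have : 0 < -(k₀:ℝ) + u + k := by linarith [hu.1]
          exact ne_of_gt this
      have := h' (-(k₀:ℝ)+u) hpoles
      rw [hΦ]
      simp only [← Finset.mul_sum]
      rw [this, mul_zero]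
    -- Φ tends to d i₀ k₀
    have hΦlim : Tendsto Φ (𝓝[>] (0:ℝ)) (𝓝 (∑ i ∈ Finset.Icc 1 s, ∑ k ∈ Finset.range (n+1), L i k)) := by
      apply tendsto_finset_sum
      intro i hi
      apply tendsto_finset_sum
      intro k hk
      have his : i ≤ s := (Finset.mem_Icc.mp hi).2
      rcases eq_or_ne k k₀ with rfl | hkk
      · -- k = k₀
        have hbase : ∀ u : ℝ, (-(k:ℝ)+u) + (k:ℝ) = u := by intro u; ring
        rcases lt_trichotomy i i₀ with hii | rfl | hii
        · -- i < i₀ : u^i₀ * d/u^i = d * u^(i₀-i) → 0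
          have hLv : L i k = 0 := by simp [hL]; omega
          rw [hLv]
          have hev : ∀ᶠ u in 𝓝[>] (0:ℝ), u^i₀ * (d i k / ((-(k:ℝ)+u) + (k:ℝ))^i)
              = d i k * u^(i₀-i) := by
            filter_upwards [self_mem_nhdsWithin] with u hu
            have hu0 : u ≠ 0 := ne_of_gt hu
            rw [hbase, pow_sub₀ _ hu0 (le_of_lt hii)]
            field_simp
          rw [Filter.tendsto_congr' hev]
          have : Tendsto (fun u : ℝ => d i k * u^(i₀-i)) (𝓝 (0:ℝ)) (𝓝 (d i k * 0^(i₀-i))) := by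
            exact (tendsto_const_nhds.mul ((continuous_pow (i₀-i)).tendsto 0))
          rw [zero_pow (by omega), mul_zero] at this
          exact this.mono_left nhdsWithin_le_nhds
        · -- i = i₀
          have hLv : L i k = d i k := by simp [hL]
          rw [hLv]
          have hev : ∀ᶠ u in 𝓝[>] (0:ℝ), u^i * (d i k / ((-(k:ℝ)+u) + (k:ℝ))^i) = d i k := by
            filter_upwards [self_mem_nhdsWithin] with u hu
            have hu0 : u ≠ 0 := ne_of_gt hu
            rw [hbase]
            field_simp
          rw [Filter.tendsto_congr' hev]
          exact tendsto_const_nhds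
        · -- i > i₀ : d i k₀ = 0
          have hd0 : d i k = 0 := hz i hii his
          have hLv : L i k = 0 := by simp [hL]; omega
          rw [hLv]
          simp only [hd0, zero_div, mul_zero]
          exact tendsto_const_nhds
      · -- k ≠ k₀
        have hLv : L i k = 0 := by simp [hL, hkk]
        rw [hLv]
        have hc : (k:ℝ) - (k₀:ℝ) ≠ 0 := by
          have : (k:ℝ) ≠ (k₀:ℝ) := by exact_mod_cast hkk
          intro hh; apply this; linarith
        have h1 : Tendsto (fun u : ℝ => u^i₀) (𝓝[>] (0:ℝ)) (𝓝 0) := by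
          have : Tendsto (fun u : ℝ => u^i₀) (𝓝 (0:ℝ)) (𝓝 ((0:ℝ)^i₀)) :=
            (continuous_pow i₀).tendsto 0
          rw [zero_pow (by omega)] at this
          exact this.mono_left nhdsWithin_le_nhds
        have h2 : Tendsto (fun u : ℝ => ((-(k₀:ℝ)+u) + (k:ℝ))^i) (𝓝[>] (0:ℝ))
            (𝓝 ((-(k₀:ℝ)+0+(k:ℝ))^i)) := by
          have : Continuous (fun u : ℝ => ((-(k₀:ℝ)+u) + (k:ℝ))^i) := by continuity
          exact (this.tendsto 0).mono_left nhdsWithin_le_nhds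
        have h3 : (-(k₀:ℝ)+0+(k:ℝ))^i ≠ 0 := by
          apply pow_ne_zero
          intro hh; apply hc; linarith
        have h4 : Tendsto (fun u : ℝ => d i k / ((-(k₀:ℝ)+u) + (k:ℝ))^i) (𝓝[>] (0:ℝ))
            (𝓝 (d i k / (-(k₀:ℝ)+0+(k:ℝ))^i)) := tendsto_const_nhds.div h2 h3
        have := h1.mul h4
        rw [zero_mul] at this
        exact this
    -- combine
    have hval : ∑ i ∈ Finset.Icc 1 s, ∑ k ∈ Finset.range (n+1), L i k = d i₀ k₀ := by
      rw [Finset.sum_eq_single i₀]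
      · rw [Finset.sum_eq_single k₀]
        · simp [hL]
        · intro k hk hkk; simp [hL, hkk]
        · intro hk; exact absurd hk₀ hk
      · intro i hi hii
        apply Finset.sum_eq_zero
        intro k hk
        simp [hL, hii]
      · intro hi; exact absurd hi₀ hi
    rw [hval] at hΦlim
    have hzero : Tendsto Φ (𝓝[>] (0:ℝ)) (𝓝 0) :=
      Tendsto.congr' (Filter.EventuallyEq.symm hΦ0) tendsto_const_nhds
    exact tendsto_nhds_unique hΦlim hzero
  -- descending induction
  intro i hi k hk
  have key : ∀ j : ℕ, ∀ i ∈ Finset.Icc 1 s, s - i ≤ j → d i k = 0 := by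
    intro j
    induction j with
    | zero =>
      intro i hi hj
      apply core k hk i hi
      intro i' h1 h2
      exact absurd h1 (by omega)
    | succ j ih =>
      intro i hi hj
      apply core k hk i hi
      intro i' h1 h2
      apply ih i' (Finset.mem_Icc.mpr ⟨by omega, h2⟩) (by omega)
  exact key (s - i) i hi le_rfl

lemma mem_zeroSet_iff {Psi : Finset ℕ} {θ : ℚ} :
    θ ∈ zeroSet Psi ↔ ∃ b ∈ Psi, ∃ a : ℕ, (1 ≤ a ∧ a ≤ b) ∧ Nat.Coprime a b ∧ θ = (a:ℚ)/b := by
  simp [zeroSet, Finset.mem_biUnion, Finset.mem_image, Finset.mem_filter, Finset.mem_Icc]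
  constructor
  · rintro ⟨b, hb, a, ⟨⟨h1, h2⟩, h3⟩, h4⟩
    exact ⟨b, hb, a, ⟨h1, h2⟩, h3, h4.symm⟩
  · rintro ⟨b, hb, a, ⟨h1, h2⟩, h3, h4⟩
    exact ⟨b, hb, a, ⟨⟨h1, h2⟩, h3⟩, h4.symm⟩

lemma zeroSet_pos {Psi : Finset ℕ} (hb : ∀ b ∈ Psi, 0 < b) {θ : ℚ} (hθ : θ ∈ zeroSet Psi) :
    0 < θ ∧ θ ≤ 1 := by
  obtain ⟨b, hbP, a, ⟨h1, h2⟩, h3, h4⟩ := mem_zeroSet_iff.mp hθ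
  have hb0 : (0:ℚ) < b := by exact_mod_cast hb b hbP
  have ha0 : (0:ℚ) < a := by exact_mod_cast h1
  constructor
  · rw [h4]; positivity
  · rw [h4, div_le_one hb0]; exact_mod_cast h2

lemma one_mem_zeroSet {Psi : Finset ℕ} (h1 : 1 ∈ Psi) : (1:ℚ) ∈ zeroSet Psi := by
  rw [mem_zeroSet_iff]
  exact ⟨1, h1, 1, ⟨le_rfl, le_rfl⟩, Nat.coprime_one_left 1, by norm_num⟩

lemma zeroSet_invol {Psi : Finset ℕ} {θ : ℚ} (hθ : θ ∈ zeroSet Psi) (hθ1 : θ ≠ 1) :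
    1 - θ ∈ zeroSet Psi := by
  obtain ⟨b, hbP, a, ⟨h1, h2⟩, h3, h4⟩ := mem_zeroSet_iff.mp hθ
  have hb2 : 2 ≤ b := by
    rcases Nat.lt_or_ge b 2 with hb | hb
    · interval_cases b
      · omega
      · exfalso; apply hθ1; rw [h4]; interval_cases a; norm_num
    · exact hb
  have hab : a < b := by
    rcases Nat.lt_or_ge a b with h | h
    · exact h
    · exfalso
      have : a = b := le_antisymm h2 h
      subst this
      have := Nat.Coprime.gcd_eq_one h3
      simp [Nat.gcd_self] at this
      omega
  rw [mem_zeroSet_iff]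
  refine ⟨b, hbP, b - a, ⟨by omega, by omega⟩, ?_, ?_⟩
  · rw [← Nat.isCoprime_iff_coprime]
    have h3' : IsCoprime (a:ℤ) (b:ℤ) := Nat.isCoprime_iff_coprime.mpr h3
    have : IsCoprime (-(a:ℤ) + (b:ℤ) * 1) (b:ℤ) := h3'.neg_left.add_mul_left_left 1
    convert this using 1
    push_cast [Nat.cast_sub (le_of_lt hab)]
    ring
  · rw [h4]
    have hb0 : (b:ℚ) ≠ 0 := by positivity
    push_cast [Nat.cast_sub (le_of_lt hab)]
    field_simp

lemma neg_prod_eq (M : ℕ) (hM : Even M) (u c : ℝ) :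
    ∏ j ∈ Finset.range M, -(u + (M:ℝ) - (j:ℝ) - c) =
      ∏ j ∈ Finset.range M, (u + (j:ℝ) + (1 - c)) := by
  have h1 : ∏ j ∈ Finset.range M, -(u + (M:ℝ) - (j:ℝ) - c) =
      (-1:ℝ)^M * ∏ j ∈ Finset.range M, (u + (M:ℝ) - (j:ℝ) - c) := by
    calc ∏ j ∈ Finset.range M, -(u + (M:ℝ) - (j:ℝ) - c)
        = ∏ j ∈ Finset.range M, ((-1:ℝ) * (u + (M:ℝ) - (j:ℝ) - c)) :=
          Finset.prod_congr rfl (fun j _ => (neg_one_mul _).symm)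
      _ = (∏ _j ∈ Finset.range M, (-1:ℝ)) * ∏ j ∈ Finset.range M, (u + (M:ℝ) - (j:ℝ) - c) :=
          Finset.prod_mul_distrib
      _ = (-1:ℝ)^M * ∏ j ∈ Finset.range M, (u + (M:ℝ) - (j:ℝ) - c) := by
          rw [Finset.prod_const, Finset.card_range]
  rw [h1, hM.neg_one_pow, one_mul]
  rw [← Finset.prod_range_reflect (fun j => u + (M:ℝ) - (j:ℝ) - c) M]
  refine Finset.prod_congr rfl ?_
  intro j hj
  have hjM : j < M := Finset.mem_range.mp hj
  have : ((M - 1 - j : ℕ) : ℝ) = (M:ℝ) - 1 - (j:ℝ) := by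
    have h2 : 1 + j ≤ M := by omega
    push_cast [Nat.cast_sub (by omega : j ≤ M - 1), Nat.cast_sub (by omega : 1 ≤ M)]
    ring
  rw [this]; ring

lemma shift_prod (M : ℕ) (u : ℝ) :
    (u + (M:ℝ)) * ∏ j ∈ Finset.range M, (u + (j:ℝ)) =
      u * ∏ j ∈ Finset.range M, (u + (j:ℝ) + 1) := by
  calc (u + (M:ℝ)) * ∏ j ∈ Finset.range M, (u + (j:ℝ))
      = ∏ j ∈ Finset.range (M+1), (u + (j:ℝ)) := by rw [Finset.prod_range_succ]; ring
    _ = (∏ j ∈ Finset.range M, (u + ((j+1:ℕ):ℝ))) * (u + ((0:ℕ):ℝ)) :=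
        Finset.prod_range_succ' _ M
    _ = u * ∏ j ∈ Finset.range M, (u + (j:ℝ) + 1) := by
        rw [Finset.prod_congr rfl (fun j (_ : j ∈ Finset.range M) =>
          (by push_cast; ring : u + ((j+1:ℕ):ℝ) = u + (j:ℝ) + 1))]
        push_cast
        ring

lemma Rfun_symm (Psi : Finset ℕ) (r : ℚ) (s n : ℕ) (hs : Odd s) (hne : Even n)
    (h1Z : (1:ℚ) ∈ zeroSet Psi) (hbpos : ∀ b ∈ Psi, 0 < b)
    (hM : ((2 * (r.num.toNat * (n / r.den)) + n : ℕ) : ℝ) = 2*(r:ℝ)*(n:ℝ) + (n:ℝ))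
    (t : ℝ) :
    Rfun Psi r s n (-(n:ℝ) - t) = - Rfun Psi r s n t := by
  set M : ℕ := 2 * (r.num.toNat * (n / r.den)) + n with hMdef
  have hMeven : Even M := by
    rcases hne with ⟨m, hm⟩
    exact ⟨r.num.toNat * (n / r.den) + m, by omega⟩
  set u : ℝ := t - (r:ℝ)*n with hu
  -- numerator identity
  have hnum : (-(n:ℝ) - t - (r:ℝ)*(n:ℝ)) *
      ∏ θ ∈ zeroSet Psi, ∏ j ∈ Finset.range M, (-(n:ℝ) - t - (r:ℝ)*(n:ℝ) + (j:ℝ) + (θ:ℝ)) =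
      -((t - (r:ℝ)*(n:ℝ)) *
      ∏ θ ∈ zeroSet Psi, ∏ j ∈ Finset.range M, (t - (r:ℝ)*(n:ℝ) + (j:ℝ) + (θ:ℝ))) := by
    have hinner : ∀ θ : ℚ, ∏ j ∈ Finset.range M, (-(n:ℝ) - t - (r:ℝ)*(n:ℝ) + (j:ℝ) + (θ:ℝ)) =
        ∏ j ∈ Finset.range M, (u + (j:ℝ) + (1 - (θ:ℝ))) := by
      intro θ
      rw [← neg_prod_eq M hMeven u (θ:ℝ)]
      refine Finset.prod_congr rfl (fun j _ => ?_)
      rw [hu, hM]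
      ring
    -- split off θ = 1 on LHS
    have hsplitL : ∏ θ ∈ zeroSet Psi, ∏ j ∈ Finset.range M, (u + (j:ℝ) + (1 - (θ:ℝ))) =
        (∏ j ∈ Finset.range M, (u + (j:ℝ))) *
        ∏ θ ∈ (zeroSet Psi).erase 1, ∏ j ∈ Finset.range M, (u + (j:ℝ) + (1 - (θ:ℝ))) := by
      rw [← Finset.mul_prod_erase _ _ h1Z]
      congr 1
      exact Finset.prod_congr rfl (fun j _ => by push_cast; ring)
    have hsplitR : ∏ θ ∈ zeroSet Psi, ∏ j ∈ Finset.range M, (t - (r:ℝ)*(n:ℝ) + (j:ℝ) + (θ:ℝ)) =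
        (∏ j ∈ Finset.range M, (u + (j:ℝ) + 1)) *
        ∏ θ ∈ (zeroSet Psi).erase 1, ∏ j ∈ Finset.range M, (u + (j:ℝ) + (θ:ℝ)) := by
      rw [← Finset.mul_prod_erase _ _ h1Z]
      congr 1
      exact Finset.prod_congr rfl (fun j _ => by push_cast [hu]; ring)
    have hmap : ∀ θ : ℚ, θ ∈ (zeroSet Psi).erase 1 → 1 - θ ∈ (zeroSet Psi).erase 1 := by
      intro θ hθ
      rw [Finset.mem_erase] at hθ ⊢
      have hpos := (zeroSet_pos hbpos hθ.2).1
      refine ⟨?_, zeroSet_invol hθ.2 hθ.1⟩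
      intro hc
      have hθ0 : θ = 0 := by linarith
      rw [hθ0] at hpos
      exact lt_irrefl _ hpos
    have hbij : ∏ θ ∈ (zeroSet Psi).erase 1, ∏ j ∈ Finset.range M, (u + (j:ℝ) + (1 - (θ:ℝ))) =
        ∏ θ ∈ (zeroSet Psi).erase 1, ∏ j ∈ Finset.range M, (u + (j:ℝ) + (θ:ℝ)) := by
      refine Finset.prod_nbij' (fun θ => 1 - θ) (fun θ => 1 - θ) (fun θ hθ => hmap θ hθ)
        (fun θ hθ => hmap θ hθ) (fun θ _ => by ring) (fun θ _ => by ring) ?_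
      intro θ hθ
      refine Finset.prod_congr rfl (fun j _ => ?_)
      push_cast
      ring
    calc (-(n:ℝ) - t - (r:ℝ)*(n:ℝ)) *
        ∏ θ ∈ zeroSet Psi, ∏ j ∈ Finset.range M, (-(n:ℝ) - t - (r:ℝ)*(n:ℝ) + (j:ℝ) + (θ:ℝ))
        = (-(u + (M:ℝ))) * ∏ θ ∈ zeroSet Psi, ∏ j ∈ Finset.range M, (u + (j:ℝ) + (1 - (θ:ℝ))) := by
          rw [Finset.prod_congr rfl (fun θ _ => hinner θ)]
          congr 1
          rw [hu, hM]; ring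
      _ = (-(u + (M:ℝ))) * ((∏ j ∈ Finset.range M, (u + (j:ℝ))) *
            ∏ θ ∈ (zeroSet Psi).erase 1, ∏ j ∈ Finset.range M, (u + (j:ℝ) + (θ:ℝ))) := by
          rw [hsplitL, hbij]
      _ = -((u * ∏ j ∈ Finset.range M, (u + (j:ℝ) + 1)) *
            ∏ θ ∈ (zeroSet Psi).erase 1, ∏ j ∈ Finset.range M, (u + (j:ℝ) + (θ:ℝ))) := by
          rw [← shift_prod M u]; ring
      _ = -((t - (r:ℝ)*(n:ℝ)) *
            ∏ θ ∈ zeroSet Psi, ∏ j ∈ Finset.range M, (t - (r:ℝ)*(n:ℝ) + (j:ℝ) + (θ:ℝ))) := by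
          rw [hsplitR, hu]; ring
  -- denominator identity
  have hden : ∏ j ∈ Finset.range (n+1), ((-(n:ℝ) - t) + (j:ℝ))^(s+1) =
      ∏ j ∈ Finset.range (n+1), (t + (j:ℝ))^(s+1) := by
    have hev : Even (s+1) := hs.add_one
    calc ∏ j ∈ Finset.range (n+1), ((-(n:ℝ) - t) + (j:ℝ))^(s+1)
        = ∏ j ∈ Finset.range (n+1), (t + ((n - j : ℕ):ℝ))^(s+1) := by
          refine Finset.prod_congr rfl (fun j hj => ?_)
          have hjn : j ≤ n := by have := Finset.mem_range.mp hj; omega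
          rw [← hev.neg_pow (t + ((n - j : ℕ):ℝ))]
          push_cast [Nat.cast_sub hjn]
          ring_nf
      _ = ∏ j ∈ Finset.range (n+1), (t + (j:ℝ))^(s+1) := by
          rw [← Finset.prod_range_reflect (fun j => (t + (j:ℝ))^(s+1)) (n+1)]
          exact Finset.prod_congr rfl (fun j hj => by congr 2)
  simp only [Rfun]
  rw [← hMdef, hnum, hden]

  rw [mul_neg, neg_div]

lemma Rfun_decay (Psi : Finset ℕ) (r : ℚ) (s n : ℕ) (hr : 0 ≤ (r:ℝ))
    (hθpos : ∀ θ ∈ zeroSet Psi, 0 ≤ (θ:ℝ) ∧ (θ:ℝ) ≤ 1)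
    (hd : 3 + (2 * (r.num.toNat * (n / r.den)) + n) * (zeroSet Psi).card ≤ (n+1)*(s+1)) :
    ∃ K : ℝ, 0 ≤ K ∧ ∀ t : ℝ, 1 ≤ t → (r:ℝ)*(n:ℝ) ≤ t →
      ((2 * (r.num.toNat * (n / r.den)) + n : ℕ):ℝ) ≤ t →
      |Rfun Psi r s n t| ≤ K / t^2 := by
  set M : ℕ := 2 * (r.num.toNat * (n / r.den)) + n with hMdef
  set c : ℕ := (zeroSet Psi).card with hc
  set C : ℝ := A1 Psi r ^ n * A2 Psi r ^ n *
      ((n.factorial : ℝ) ^ (s + 1) /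
        (((n / r.den).factorial : ℝ)) ^ ((2 * r.num.toNat + r.den) * (zeroSet Psi).card)) with hC
  refine ⟨|C| * 2^(M*c), by positivity, ?_⟩
  intro t h1 h2 h3
  have ht0 : 0 < t := lt_of_lt_of_le zero_lt_one h1
  have hrn : 0 ≤ (r:ℝ)*(n:ℝ) := by positivity
  have hRt : Rfun Psi r s n t = C * ((t - (r:ℝ)*(n:ℝ)) *
      ∏ θ ∈ zeroSet Psi, ∏ j ∈ Finset.range M, (t - (r:ℝ)*(n:ℝ) + (j:ℝ) + (θ:ℝ))) /
      ∏ j ∈ Finset.range (n+1), (t + (j:ℝ))^(s+1) := rfl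
  set N : ℝ := (t - (r:ℝ)*(n:ℝ)) *
      ∏ θ ∈ zeroSet Psi, ∏ j ∈ Finset.range M, (t - (r:ℝ)*(n:ℝ) + (j:ℝ) + (θ:ℝ)) with hN
  set D : ℝ := ∏ j ∈ Finset.range (n+1), (t + (j:ℝ))^(s+1) with hD
  have hDpos : 0 < D := Finset.prod_pos fun j _ => pow_pos (by positivity) _
  have hfac : ∀ θ ∈ zeroSet Psi, ∀ j ∈ Finset.range M,
      |t - (r:ℝ)*(n:ℝ) + (j:ℝ) + (θ:ℝ)| ≤ 2*t := by
    intro θ hθ j hj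
    obtain ⟨hθ0, hθ1⟩ := hθpos θ hθ
    have hjM : j < M := Finset.mem_range.mp hj
    have hjM' : (j:ℝ) + 1 ≤ (M:ℝ) := by exact_mod_cast hjM
    rw [abs_le]
    constructor <;> nlinarith [h3, h2, hθ0, hθ1]
  have hNbound : |N| ≤ 2^(M*c) * t^(1+M*c) := by
    rw [hN, abs_mul]
    have hb1 : |t - (r:ℝ)*(n:ℝ)| ≤ t := by
      rw [abs_of_nonneg (by linarith)]
      linarith
    have hb2 : |∏ θ ∈ zeroSet Psi, ∏ j ∈ Finset.range M,
        (t - (r:ℝ)*(n:ℝ) + (j:ℝ) + (θ:ℝ))| ≤ (2*t)^(M*c) := by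
      rw [Finset.abs_prod]
      calc ∏ θ ∈ zeroSet Psi, |∏ j ∈ Finset.range M, (t - (r:ℝ)*(n:ℝ) + (j:ℝ) + (θ:ℝ))|
          ≤ ∏ θ ∈ zeroSet Psi, (2*t)^M := by
            apply Finset.prod_le_prod (fun θ _ => abs_nonneg _)
            intro θ hθ
            rw [Finset.abs_prod]
            calc ∏ j ∈ Finset.range M, |t - (r:ℝ)*(n:ℝ) + (j:ℝ) + (θ:ℝ)|
                ≤ ∏ j ∈ Finset.range M, (2*t) := by
                  apply Finset.prod_le_prod (fun j _ => abs_nonneg _)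
                  exact fun j hj => hfac θ hθ j hj
              _ = (2*t)^M := by rw [Finset.prod_const, Finset.card_range]
        _ = (2*t)^(M*c) := by rw [Finset.prod_const, ← hc, ← pow_mul]
    calc |t - (r:ℝ)*(n:ℝ)| * |∏ θ ∈ zeroSet Psi, ∏ j ∈ Finset.range M,
          (t - (r:ℝ)*(n:ℝ) + (j:ℝ) + (θ:ℝ))|
        ≤ t * (2*t)^(M*c) := by
          apply mul_le_mul hb1 hb2 (abs_nonneg _) (le_of_lt ht0)
      _ = 2^(M*c) * t^(1+M*c) := by rw [mul_pow, pow_add, pow_one]; ring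
  have hDbound : t^((n+1)*(s+1)) ≤ D := by
    rw [hD]
    calc t^((n+1)*(s+1)) = ∏ _j ∈ Finset.range (n+1), t^(s+1) := by
          rw [Finset.prod_const, Finset.card_range, ← pow_mul, Nat.mul_comm]
      _ ≤ ∏ j ∈ Finset.range (n+1), (t + (j:ℝ))^(s+1) := by
          apply Finset.prod_le_prod (fun j _ => by positivity)
          intro j hj
          apply pow_le_pow_left₀ (le_of_lt ht0)
          have : (0:ℝ) ≤ (j:ℝ) := Nat.cast_nonneg j
          linarith
  calc |Rfun Psi r s n t| = |C| * |N| / D := by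
        rw [hRt, abs_div, abs_mul, abs_of_pos hDpos]
      _ ≤ |C| * (2^(M*c) * t^(1+M*c)) / t^((n+1)*(s+1)) := by
        apply div_le_div₀ (by positivity) (mul_le_mul_of_nonneg_left hNbound (abs_nonneg _))
          (by positivity) hDbound
      _ ≤ |C| * 2^(M*c) / t^2 := by
        rw [div_le_div_iff₀ (by positivity) (by positivity)]
        calc |C| * (2^(M*c) * t^(1+M*c)) * t^2 = |C| * 2^(M*c) * t^(3+M*c) := by
              rw [pow_add, pow_add]; ring
          _ ≤ |C| * 2^(M*c) * t^((n+1)*(s+1)) := by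
              apply mul_le_mul_of_nonneg_left (pow_le_pow_right₀ h1 hd) (by positivity)

lemma tendsto_t_div_pow (k : ℕ) (i : ℕ) (hi : 1 ≤ i) :
    Tendsto (fun t : ℝ => t/(t + (k:ℝ))^i) atTop (𝓝 (if i = 1 then 1 else 0)) := by
  have hbase : Tendsto (fun t : ℝ => t/(t + (k:ℝ))) atTop (𝓝 1) := by
    have h1 : Tendsto (fun t : ℝ => 1 - (k:ℝ)/(t+(k:ℝ))) atTop (𝓝 (1 - 0)) := by
      exact tendsto_const_nhds.sub (Tendsto.div_atTop tendsto_const_nhds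
        (tendsto_atTop_add_const_right _ _ tendsto_id))
    rw [sub_zero] at h1
    apply Tendsto.congr' _ h1
    filter_upwards [eventually_gt_atTop (0:ℝ)] with t ht
    have h0 : t + (k:ℝ) ≠ 0 := by positivity
    field_simp
    ring
  rcases eq_or_lt_of_le hi with rfl | hi2
  · simpa using hbase
  · have hine : ¬ (i = 1) := by omega
    rw [if_neg hine]
    have h2 : Tendsto (fun t : ℝ => ((t+(k:ℝ))^(i-1))⁻¹) atTop (𝓝 0) := by
      apply tendsto_inv_atTop_zero.comp
      exact (tendsto_pow_atTop (by omega : i - 1 ≠ 0)).comp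
        (tendsto_atTop_add_const_right _ _ tendsto_id)
    have h3 := hbase.mul h2
    rw [one_mul] at h3
    apply Tendsto.congr' _ h3
    filter_upwards [eventually_gt_atTop (0:ℝ)] with t ht
    have h0 : t + (k:ℝ) ≠ 0 := by positivity
    have hpow : (t + (k:ℝ))^i = (t + (k:ℝ)) * (t + (k:ℝ))^(i-1) := by
      rw [← pow_succ']
      congr 1
      omega
    rw [hpow]
    field_simp

lemma rho_one_zero (s n : ℕ) (hs1 : 1 ≤ s) (c : ℕ → ℕ → ℝ) (R : ℝ → ℝ) (K T0 : ℝ)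
    (hbound : ∀ t : ℝ, T0 ≤ t → 1 ≤ t → |R t| ≤ K / t^2)
    (hFR : ∀ t : ℝ, 0 < t → R t = ∑ i ∈ Finset.Icc 1 s, ∑ k ∈ Finset.range (n+1),
      c i k/(t+(k:ℝ))^i) :
    ∑ k ∈ Finset.range (n+1), c 1 k = 0 := by
  have h1 : Tendsto (fun t : ℝ => t * R t) atTop (𝓝 0) := by
    refine squeeze_zero_norm' ?_ (Tendsto.div_atTop (tendsto_const_nhds (x := K)) tendsto_id)
    · filter_upwards [eventually_ge_atTop T0, eventually_ge_atTop (1:ℝ)] with t ht1 ht2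
      have ht0 : 0 < t := lt_of_lt_of_le zero_lt_one ht2
      rw [Real.norm_eq_abs, abs_mul, abs_of_pos ht0]
      calc t * |R t| ≤ t * (K/t^2) := by
            exact mul_le_mul_of_nonneg_left (hbound t ht1 ht2) (le_of_lt ht0)
        _ = K / t := by field_simp
  have h2 : Tendsto (fun t : ℝ => t * R t) atTop
      (𝓝 (∑ i ∈ Finset.Icc 1 s, ∑ k ∈ Finset.range (n+1),
        c i k * (if i = 1 then (1:ℝ) else 0))) := by
    have h3 : Tendsto (fun t : ℝ => ∑ i ∈ Finset.Icc 1 s, ∑ k ∈ Finset.range (n+1),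
        c i k * (t/(t+(k:ℝ))^i)) atTop
        (𝓝 (∑ i ∈ Finset.Icc 1 s, ∑ k ∈ Finset.range (n+1),
          c i k * (if i = 1 then (1:ℝ) else 0))) := by
      apply tendsto_finset_sum
      intro i hi
      apply tendsto_finset_sum
      intro k hk
      exact tendsto_const_nhds.mul (tendsto_t_div_pow k i (Finset.mem_Icc.mp hi).1)
    apply Tendsto.congr' _ h3
    filter_upwards [eventually_gt_atTop (0:ℝ)] with t ht
    rw [hFR t ht, Finset.mul_sum]
    refine Finset.sum_congr rfl (fun i _ => ?_)
    rw [Finset.mul_sum]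
    refine Finset.sum_congr rfl (fun k _ => ?_)
    ring
  have h4 : ∑ i ∈ Finset.Icc 1 s, ∑ k ∈ Finset.range (n+1),
      c i k * (if i = 1 then (1:ℝ) else 0) = ∑ k ∈ Finset.range (n+1), c 1 k := by
    rw [Finset.sum_eq_single 1]
    · exact Finset.sum_congr rfl (fun k _ => by simp)
    · intro i _ hne
      exact Finset.sum_eq_zero (fun k _ => by simp [hne])
    · intro h
      exact absurd (Finset.mem_Icc.mpr ⟨le_rfl, hs1⟩) h
  rw [h4] at h2
  exact tendsto_nhds_unique h2 h1

lemma rho_even_zero (s n : ℕ) (c : ℕ → ℕ → ℝ) (R : ℝ → ℝ)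
    (hsymm : ∀ t : ℝ, R (-(n:ℝ) - t) = - R t)
    (hFR : ∀ t : ℝ, (∀ k ∈ Finset.range (n+1), t + (k:ℝ) ≠ 0) →
      R t = ∑ i ∈ Finset.Icc 1 s, ∑ k ∈ Finset.range (n+1), c i k/(t+(k:ℝ))^i) :
    ∀ i ∈ Finset.Icc 1 s, Even i → ∑ k ∈ Finset.range (n+1), c i k = 0 := by
  set d : ℕ → ℕ → ℝ := fun i k => c i k + (-1:ℝ)^i * c i (n-k) with hd
  have hU : ∀ i ∈ Finset.Icc 1 s, ∀ k ∈ Finset.range (n+1), d i k = 0 := by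
    apply uniq
    intro t ht
    have hpoles1 : ∀ k ∈ Finset.range (n+1), t + (k:ℝ) ≠ 0 := by
      intro k hk; positivity
    have hpoles2 : ∀ k ∈ Finset.range (n+1), (-(n:ℝ) - t) + (k:ℝ) ≠ 0 := by
      intro k hk
      have hkn : k ≤ n := by have := Finset.mem_range.mp hk; omega
      have hkr : (k:ℝ) ≤ (n:ℝ) := by exact_mod_cast hkn
      intro hc
      linarith
    have e1 := hFR t hpoles1
    have e2 := hFR _ hpoles2
    rw [hsymm t] at e2
    have e3 : ∑ i ∈ Finset.Icc 1 s, ∑ k ∈ Finset.range (n+1),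
        ((-1:ℝ)^i * c i (n-k))/(t+(k:ℝ))^i
        = ∑ i ∈ Finset.Icc 1 s, ∑ k ∈ Finset.range (n+1), c i k/((-(n:ℝ)-t)+(k:ℝ))^i := by
      refine Finset.sum_congr rfl (fun i _ => ?_)
      rw [← Finset.sum_range_reflect (fun k => ((-1:ℝ)^i * c i (n-k))/(t+(k:ℝ))^i) (n+1)]
      refine Finset.sum_congr rfl (fun k hk => ?_)
      have hkn : k ≤ n := by have := Finset.mem_range.mp hk; omega
      have h1 : n - (n - k) = k := by omega
      have h2 : ((n - k:ℕ):ℝ) = (n:ℝ) - (k:ℝ) := by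
        push_cast [Nat.cast_sub hkn]; ring
      show ((-1:ℝ)^i * c i (n - (n + 1 - 1 - k)))/(t+((n+1-1-k:ℕ):ℝ))^i
        = c i k/((-(n:ℝ)-t)+(k:ℝ))^i
      have h3 : n + 1 - 1 - k = n - k := by omega
      rw [h3, h1, h2]
      have hX : (0:ℝ) < t + ((n:ℝ) - (k:ℝ)) := by
        have hkr : (k:ℝ) ≤ (n:ℝ) := by exact_mod_cast hkn
        linarith
      have hbase : (-(n:ℝ)-t)+(k:ℝ) = -(t + ((n:ℝ)-(k:ℝ))) := by ring
      rw [hbase]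
      rcases Nat.even_or_odd i with hev | hod
      · rw [hev.neg_pow (t + ((n:ℝ)-(k:ℝ))), hev.neg_one_pow, one_mul]
      · rw [hod.neg_pow (t + ((n:ℝ)-(k:ℝ))), hod.neg_one_pow, div_neg, neg_one_mul, neg_div]
    have e4 : ∑ i ∈ Finset.Icc 1 s, ∑ k ∈ Finset.range (n+1), d i k / (t+(k:ℝ))^i
        = (∑ i ∈ Finset.Icc 1 s, ∑ k ∈ Finset.range (n+1), c i k/(t+(k:ℝ))^i)
          + ∑ i ∈ Finset.Icc 1 s, ∑ k ∈ Finset.range (n+1),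
            ((-1:ℝ)^i * c i (n-k))/(t+(k:ℝ))^i := by
      rw [← Finset.sum_add_distrib]
      refine Finset.sum_congr rfl (fun i _ => ?_)
      rw [← Finset.sum_add_distrib]
      refine Finset.sum_congr rfl (fun k _ => ?_)
      rw [hd, ← add_div]
    rw [e4, e3, ← e1, ← e2]
    ring
  intro i hi hieven
  have hsum0 : ∑ k ∈ Finset.range (n+1), d i k = 0 :=
    Finset.sum_eq_zero (fun k hk => hU i hi k hk)
  have hrefl : ∑ k ∈ Finset.range (n+1), c i (n-k) = ∑ k ∈ Finset.range (n+1), c i k := by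
    have := Finset.sum_range_reflect (fun k => c i k) (n+1)
    simpa using this
  rw [hd] at hsum0
  simp only [Finset.sum_add_distrib, ← Finset.mul_sum, hrefl, hieven.neg_one_pow, one_mul] at hsum0
  linarith


lemma summable_theta (θc : ℝ) (hθ : 0 < θc) (i : ℕ) (hi : 2 ≤ i) :
    Summable (fun ℓ : ℕ => 1/((ℓ:ℝ)+θc)^i) := by
  rw [← summable_nat_add_iff 1]
  have hbase : Summable (fun ℓ : ℕ => 1/((ℓ:ℝ)+1)^2) := by
    have h1 : Summable (fun ℓ : ℕ => 1/((ℓ:ℝ))^2) := Real.summable_one_div_nat_pow.mpr one_lt_two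
    have h2 := (summable_nat_add_iff 1).mpr h1
    apply h2.congr
    intro ℓ
    push_cast
    ring
  apply Summable.of_nonneg_of_le (fun ℓ => by positivity) _ hbase
  intro ℓ
  have hxy : ((ℓ:ℝ)+1) ≤ (((ℓ+1:ℕ)):ℝ) + θc := by push_cast; linarith
  have hx1 : (1:ℝ) ≤ (ℓ:ℝ) + 1 := by
    have h0 : (0:ℝ) ≤ (ℓ:ℝ) := Nat.cast_nonneg ℓ
    linarith
  have hx0 : (0:ℝ) < ((ℓ:ℝ)+1)^2 := by positivity
  have hkey : ((ℓ:ℝ)+1)^2 ≤ ((((ℓ+1:ℕ)):ℝ) + θc)^i := by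
    calc ((ℓ:ℝ)+1)^2 ≤ ((((ℓ+1:ℕ)):ℝ) + θc)^2 := by
          apply pow_le_pow_left₀ (by positivity) hxy
      _ ≤ ((((ℓ+1:ℕ)):ℝ) + θc)^i := by
          apply pow_le_pow_right₀ (le_trans hx1 hxy) hi
  exact one_div_le_one_div_of_le hx0 hkey

lemma tail_tendsto (θc : ℝ) (hθ : 0 < θc) (k : ℕ) :
    Tendsto (fun M : ℕ => ∑ ℓ ∈ Finset.Ico (M+1) (M+k+1), 1/((ℓ:ℝ)+θc)) atTop (𝓝 0) := by
  refine squeeze_zero (g := fun M : ℕ => (k:ℝ)/((M:ℝ)+1))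
    (fun M => Finset.sum_nonneg (fun ℓ _ => by positivity)) ?_ ?_
  · intro M
    calc ∑ ℓ ∈ Finset.Ico (M+1) (M+k+1), 1/((ℓ:ℝ)+θc)
        ≤ ∑ _ℓ ∈ Finset.Ico (M+1) (M+k+1), 1/((M:ℝ)+1) := by
          apply Finset.sum_le_sum
          intro ℓ hℓ
          have hℓ1 : M+1 ≤ ℓ := (Finset.mem_Ico.mp hℓ).1
          have hℓr : ((M:ℝ))+1 ≤ (ℓ:ℝ) := by exact_mod_cast hℓ1
          apply one_div_le_one_div_of_le (by positivity)
          linarith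
      _ = (k:ℝ)/((M:ℝ)+1) := by
          rw [Finset.sum_const, Nat.card_Ico]
          have : M + k + 1 - (M+1) = k := by omega
          rw [this, nsmul_eq_mul]
          ring
  · have h1 := tendsto_const_div_atTop_nhds_zero_nat (k:ℝ)
    have h2 : Tendsto (fun M : ℕ => M + 1) atTop atTop := tendsto_add_atTop_nat 1
    have h3 := h1.comp h2
    apply h3.congr
    intro M
    simp only [Function.comp_apply]
    push_cast
    ring

/-- Linear forms: for every `θ ∈ 𝓕_B` the series `r_{n,θ} = ∑_{m=1}^{∞} R_n(m+θ)` converges,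
with sum `ρ_{0,θ} + ∑_{3 ≤ i ≤ s, i odd} ρ_i ζ(i,θ)`, where
`ρ_i = ∑_{k=0}^{n} a_{i,k}` (independent of `θ`) and
`ρ_{0,θ} = −∑_{k=0}^{n}∑_{ℓ=0}^{k}∑_{i=1}^{s} a_{i,k}/(ℓ+θ)ⁱ`. -/
theorem linear_forms_lemma
    (B : ℝ) (hB : 0 < B) (r : ℚ) (hr : 0 < r)
    (Psi : Finset ℕ) (hPsi : ∀ b : ℕ, b ∈ Psi ↔ 0 < b ∧ (Nat.totient b : ℝ) ≤ B)
    (s : ℕ) (hs : Odd s) (hsB : 10 * (2 * (r : ℝ) + 1) * B ^ 2 ≤ (s : ℝ))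
    (hFB : ((zeroSet Psi).card : ℝ) ≤ B ^ 2)
    (n : ℕ) (hn : 0 < n) (hPn : Pconst Psi r ∣ n)
    (a : ℕ → ℕ → ℚ)
    (ha : ∀ t : ℝ, (∀ k ∈ Finset.range (n + 1), t + (k : ℝ) ≠ 0) →
      Rfun Psi r s n t = ∑ i ∈ Finset.Icc 1 s, ∑ k ∈ Finset.range (n + 1),
        (a i k : ℝ) / (t + (k : ℝ)) ^ i) :
    ∀ θ ∈ zeroSet Psi,
      HasSum (fun m : ℕ => Rfun Psi r s n ((m : ℝ) + 1 + (θ : ℝ)))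
        (((- ∑ k ∈ Finset.range (n + 1), ∑ ℓ ∈ Finset.range (k + 1),
            ∑ i ∈ Finset.Icc 1 s, a i k / ((ℓ : ℚ) + θ) ^ i : ℚ) : ℝ) +
          ∑ i ∈ (Finset.Icc 3 s).filter (fun i => Odd i),
            ((∑ k ∈ Finset.range (n + 1), a i k : ℚ) : ℝ) *
              hurwitzZetaValue i (θ : ℝ)) := by
  intro θ hθZ
  classical
  -- basic facts
  have hbpos : ∀ b ∈ Psi, 0 < b := fun b hb => ((hPsi b).mp hb).1
  obtain ⟨b₀, hb₀, -⟩ := mem_zeroSet_iff.mp hθZ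
  have htot : (1:ℝ) ≤ (Nat.totient b₀ : ℝ) := by
    exact_mod_cast Nat.totient_pos.mpr (hbpos b₀ hb₀)
  have hB1 : (1:ℝ) ≤ B := le_trans htot ((hPsi b₀).mp hb₀).2
  have h1Psi : 1 ∈ Psi := (hPsi 1).mpr ⟨one_pos, by rw [Nat.totient_one]; exact_mod_cast hB1⟩
  have h1Z : (1:ℚ) ∈ zeroSet Psi := one_mem_zeroSet h1Psi
  have hr0 : (0:ℝ) ≤ (r:ℝ) := by exact_mod_cast hr.le
  have hrpos : (0:ℝ) < (r:ℝ) := by exact_mod_cast hr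
  have hsR : (10:ℝ) ≤ (s:ℝ) := by nlinarith [sq_nonneg B]
  have hs1 : 1 ≤ s := by
    have : (1:ℝ) ≤ (s:ℝ) := by linarith
    exact_mod_cast this
  -- divisibility facts
  have hldvd : r.den ∣ n := by
    refine dvd_trans ⟨2 * (Psi.biUnion Nat.primeFactors).lcm (fun p => p - 1), ?_⟩ hPn
    rw [Pconst]; ring
  have h2dvd : 2 ∣ n := by
    refine dvd_trans ⟨r.den * (Psi.biUnion Nat.primeFactors).lcm (fun p => p - 1), ?_⟩ hPn
    rw [Pconst]; ring
  have hneven : Even n := by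
    rcases h2dvd with ⟨m, hm⟩
    exact ⟨m, by omega⟩
  have hdenne : ((r.den:ℕ):ℝ) ≠ 0 := Nat.cast_ne_zero.mpr r.den_nz
  have hnumtn : ((r.num.toNat:ℕ):ℝ) = ((r.num:ℤ):ℝ) := by
    have h := Int.toNat_of_nonneg (le_of_lt (Rat.num_pos.mpr hr))
    exact_mod_cast congrArg (fun z : ℤ => (z:ℝ)) h
  have hMreal : ((2 * (r.num.toNat * (n / r.den)) + n : ℕ) : ℝ) = 2*(r:ℝ)*(n:ℝ) + (n:ℝ) := by
    have hq : ((n / r.den : ℕ):ℝ) = (n:ℝ)/((r.den:ℕ):ℝ) := Nat.cast_div hldvd hdenne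
    have hrdef : (r:ℝ) = ((r.num:ℤ):ℝ)/((r.den:ℕ):ℝ) := by
      rw [Rat.cast_def]
    push_cast [hq, hnumtn, hrdef]
    field_simp
  -- degree inequality
  have hn1 : (1:ℝ) ≤ (n:ℝ) := by exact_mod_cast hn
  have hd : 3 + (2 * (r.num.toNat * (n / r.den)) + n) * (zeroSet Psi).card ≤ (n+1)*(s+1) := by
    have hcard0 : (0:ℝ) ≤ ((zeroSet Psi).card:ℝ) := Nat.cast_nonneg _
    have e1 : ((zeroSet Psi).card:ℝ) * (2*(r:ℝ)+1) ≤ (s:ℝ)/10 := by nlinarith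
    have hreal : (3:ℝ) + ((2 * (r.num.toNat * (n / r.den)) + n : ℕ):ℝ) * ((zeroSet Psi).card:ℝ)
        ≤ ((n:ℝ)+1)*((s:ℝ)+1) := by
      rw [hMreal]
      nlinarith [e1, hn1, hsR, hcard0]
    exact_mod_cast hreal
  -- θ facts
  obtain ⟨hθq0, hθq1⟩ := zeroSet_pos hbpos hθZ
  have hθ0 : (0:ℝ) < ((θ:ℚ):ℝ) := by exact_mod_cast hθq0
  have hθ1 : ((θ:ℚ):ℝ) ≤ 1 := by exact_mod_cast hθq1
  have hθZpos : ∀ ψ ∈ zeroSet Psi, 0 ≤ ((ψ:ℚ):ℝ) ∧ ((ψ:ℚ):ℝ) ≤ 1 := by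
    intro ψ hψ
    obtain ⟨h1', h2'⟩ := zeroSet_pos hbpos hψ
    constructor
    · exact_mod_cast h1'.le
    · exact_mod_cast h2'
  -- coefficients
  set c : ℕ → ℕ → ℝ := fun i k => ((a i k : ℚ):ℝ) with hcdef
  have hFR : ∀ t : ℝ, (∀ k ∈ Finset.range (n+1), t + (k:ℝ) ≠ 0) →
      Rfun Psi r s n t = ∑ i ∈ Finset.Icc 1 s, ∑ k ∈ Finset.range (n+1), c i k/(t+(k:ℝ))^i := ha
  -- symmetry and vanishing of even rho
  have hsymm : ∀ t : ℝ, Rfun Psi r s n (-(n:ℝ) - t) = - Rfun Psi r s n t :=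
    Rfun_symm Psi r s n hs hneven h1Z hbpos hMreal
  have hρeven : ∀ i ∈ Finset.Icc 1 s, Even i → ∑ k ∈ Finset.range (n+1), c i k = 0 :=
    rho_even_zero s n c _ hsymm hFR
  -- decay and vanishing of rho_1
  obtain ⟨K, hK0, hKb⟩ := Rfun_decay Psi r s n hr0 hθZpos hd
  set T0 : ℝ := max ((r:ℝ)*(n:ℝ)) (((2 * (r.num.toNat * (n / r.den)) + n : ℕ)):ℝ) with hT0
  have hbound : ∀ t : ℝ, T0 ≤ t → 1 ≤ t → |Rfun Psi r s n t| ≤ K/t^2 := by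
    intro t h1 h2
    exact hKb t h2 (le_trans (le_max_left _ _) h1) (le_trans (le_max_right _ _) h1)
  have hFRpos : ∀ t : ℝ, 0 < t → Rfun Psi r s n t =
      ∑ i ∈ Finset.Icc 1 s, ∑ k ∈ Finset.range (n+1), c i k/(t+(k:ℝ))^i :=
    fun t ht => hFR t (fun k hk => by positivity)
  have hρ1 : ∑ k ∈ Finset.range (n+1), c 1 k = 0 :=
    rho_one_zero s n hs1 c _ K T0 hbound hFRpos
  -- notation
  set f : ℕ → ℝ := fun m => Rfun Psi r s n ((m:ℝ) + 1 + ((θ:ℚ):ℝ)) with hfdef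
  set T : ℕ → ℕ → ℝ := fun i N => ∑ ℓ ∈ Finset.range N, 1/((ℓ:ℝ)+((θ:ℚ):ℝ))^i with hTdef
  have hfm : ∀ m : ℕ, f m = ∑ i ∈ Finset.Icc 1 s, ∑ k ∈ Finset.range (n+1),
      c i k/((((m:ℝ)+1+((θ:ℚ):ℝ)))+(k:ℝ))^i := by
    intro m
    apply hFR
    intro k hk
    positivity
  -- summability
  obtain ⟨m₀, hm₀⟩ := exists_nat_ge T0
  have hsummf : Summable f := by
    rw [← summable_nat_add_iff (m₀+1)]
    have hg : Summable (fun m : ℕ => K * (1/((m:ℝ)+1)^2)) := by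
      apply Summable.mul_left
      have h1 : Summable (fun ℓ : ℕ => 1/((ℓ:ℝ))^2) :=
        Real.summable_one_div_nat_pow.mpr one_lt_two
      have h2 := (summable_nat_add_iff 1).mpr h1
      apply h2.congr
      intro ℓ
      push_cast
      ring
    apply Summable.of_norm_bounded hg
    intro m
    have hm1 : ((m:ℝ)+1) ≤ (((m+(m₀+1):ℕ)):ℝ) + 1 + ((θ:ℚ):ℝ) := by
      push_cast
      linarith [Nat.cast_nonneg (α := ℝ) m₀]
    have ht1 : (1:ℝ) ≤ (((m+(m₀+1):ℕ)):ℝ) + 1 + ((θ:ℚ):ℝ) := by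
      push_cast
      have h0 : (0:ℝ) ≤ (m:ℝ) := Nat.cast_nonneg m
      have h0' : (0:ℝ) ≤ (m₀:ℝ) := Nat.cast_nonneg m₀
      linarith
    have htT0 : T0 ≤ (((m+(m₀+1):ℕ)):ℝ) + 1 + ((θ:ℚ):ℝ) := by
      push_cast
      have h0 : (0:ℝ) ≤ (m:ℝ) := Nat.cast_nonneg m
      linarith
    have hb := hbound _ htT0 ht1
    rw [Real.norm_eq_abs]
    refine le_trans hb ?_
    rw [mul_one_div]
    apply div_le_div_of_nonneg_left hK0 (by positivity)
    apply pow_le_pow_left₀ (by positivity) hm1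
  -- partial sums
  have hps : ∀ M : ℕ, ∑ m ∈ Finset.range M, f m =
      (-∑ i ∈ Finset.Icc 1 s, ∑ k ∈ Finset.range (n+1), c i k * T i (k+1))
      + ∑ i ∈ Finset.Icc 1 s, ∑ k ∈ Finset.range (n+1), c i k * T i (M+k+1) := by
    intro M
    have step1 : ∑ m ∈ Finset.range M, f m = ∑ i ∈ Finset.Icc 1 s, ∑ k ∈ Finset.range (n+1),
        ∑ m ∈ Finset.range M, c i k/((((m:ℝ)+1+((θ:ℚ):ℝ)))+(k:ℝ))^i := by
      rw [Finset.sum_congr rfl (fun m _ => hfm m), Finset.sum_comm]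
      exact Finset.sum_congr rfl (fun i _ => Finset.sum_comm)
    have step2 : ∀ i ∈ Finset.Icc 1 s, ∀ k ∈ Finset.range (n+1),
        ∑ m ∈ Finset.range M, c i k/((((m:ℝ)+1+((θ:ℚ):ℝ)))+(k:ℝ))^i
          = c i k * T i (M+k+1) - c i k * T i (k+1) := by
      intro i hi k hk
      have e1 : ∀ m : ℕ, c i k/((((m:ℝ)+1+((θ:ℚ):ℝ)))+(k:ℝ))^i
          = c i k * (1/((((k+1+m:ℕ)):ℝ)+((θ:ℚ):ℝ))^i) := by
        intro m
        rw [mul_one_div]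
        congr 2
        push_cast
        ring
      rw [Finset.sum_congr rfl (fun m _ => e1 m), ← Finset.mul_sum]
      have e2 : ∑ m ∈ Finset.range M, (1:ℝ)/((((k+1+m:ℕ)):ℝ)+((θ:ℚ):ℝ))^i
          = T i (M+k+1) - T i (k+1) := by
        have e3 : ∑ ℓ ∈ Finset.Ico (k+1) (M+(k+1)), (1:ℝ)/((ℓ:ℝ)+((θ:ℚ):ℝ))^i
            = ∑ m ∈ Finset.range M, (1:ℝ)/((((k+1+m:ℕ)):ℝ)+((θ:ℚ):ℝ))^i := by
          rw [Finset.sum_Ico_eq_sum_range]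
          have hMM : M + (k+1) - (k+1) = M := by omega
          rw [hMM]
        rw [← e3, Finset.sum_Ico_eq_sub _ (by omega : k+1 ≤ M+(k+1))]
        rw [hTdef]
        have hMM2 : M + (k + 1) = M + k + 1 := by omega
        rw [hMM2]
      rw [e2, mul_sub]
    rw [step1, Finset.sum_congr rfl (fun i hi => Finset.sum_congr rfl (fun k hk => step2 i hi k hk))]
    simp only [Finset.sum_sub_distrib]
    ring
  -- limits
  have hWlim : Tendsto (fun M : ℕ => ∑ i ∈ Finset.Icc 1 s, ∑ k ∈ Finset.range (n+1),
      c i k * T i (M+k+1)) atTop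
      (𝓝 (∑ i ∈ Finset.Icc 1 s, if i = 1 then 0 else
        (∑ k ∈ Finset.range (n+1), c i k) * hurwitzZetaValue i ((θ:ℚ):ℝ))) := by
    apply tendsto_finset_sum
    intro i hi
    obtain ⟨hi1, his⟩ := Finset.mem_Icc.mp hi
    rcases eq_or_ne i 1 with rfl | hne
    · rw [if_pos rfl]
      have hW1eq : ∀ M : ℕ, ∑ k ∈ Finset.range (n+1), c 1 k * T 1 (M+k+1)
          = ∑ k ∈ Finset.range (n+1), c 1 k *
            ∑ ℓ ∈ Finset.Ico (M+1) (M+k+1), 1/((ℓ:ℝ)+((θ:ℚ):ℝ)) := by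
        intro M
        have h0 : ∑ k ∈ Finset.range (n+1), c 1 k * T 1 (M+1) = 0 := by
          rw [← Finset.sum_mul, hρ1, zero_mul]
        have h1 : ∀ k ∈ Finset.range (n+1), c 1 k *
            ∑ ℓ ∈ Finset.Ico (M+1) (M+k+1), 1/((ℓ:ℝ)+((θ:ℚ):ℝ))
            = c 1 k * T 1 (M+k+1) - c 1 k * T 1 (M+1) := by
          intro k hk
          have hdiff : T 1 (M+k+1) - T 1 (M+1)
              = ∑ ℓ ∈ Finset.Ico (M+1) (M+k+1), 1/((ℓ:ℝ)+((θ:ℚ):ℝ)) := by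
            rw [hTdef]
            simp only [pow_one]
            rw [Finset.sum_Ico_eq_sub _ (by omega : M+1 ≤ M+k+1)]
          rw [← mul_sub, hdiff]
        rw [Finset.sum_congr rfl h1, Finset.sum_sub_distrib, h0, sub_zero]
      have hlim0 : Tendsto (fun M : ℕ => ∑ k ∈ Finset.range (n+1), c 1 k *
          ∑ ℓ ∈ Finset.Ico (M+1) (M+k+1), 1/((ℓ:ℝ)+((θ:ℚ):ℝ))) atTop
          (𝓝 (∑ k ∈ Finset.range (n+1), c 1 k * 0)) := by
        apply tendsto_finset_sum
        intro k _
        exact tendsto_const_nhds.mul (tail_tendsto ((θ:ℚ):ℝ) hθ0 k)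
      rw [Finset.sum_congr rfl (fun k _ => mul_zero (c 1 k))] at hlim0
      rw [Finset.sum_const, smul_zero] at hlim0
      exact Tendsto.congr (fun M => (hW1eq M).symm) hlim0
    · rw [if_neg hne]
      have hi2 : 2 ≤ i := by omega
      have hsummable := summable_theta ((θ:ℚ):ℝ) hθ0 i hi2
      have hTi : Tendsto (fun N => T i N) atTop (𝓝 (hurwitzZetaValue i ((θ:ℚ):ℝ))) := by
        have h := hsummable.hasSum.tendsto_sum_nat
        exact h
      have hlim1 : Tendsto (fun M : ℕ => ∑ k ∈ Finset.range (n+1), c i k * T i (M+k+1)) atTop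
          (𝓝 (∑ k ∈ Finset.range (n+1), c i k * hurwitzZetaValue i ((θ:ℚ):ℝ))) := by
        apply tendsto_finset_sum
        intro k _
        exact tendsto_const_nhds.mul (hTi.comp (tendsto_add_atTop_nat (k+1)))
      rw [← Finset.sum_mul] at hlim1
      exact hlim1
  -- combine limits
  have htendsto : Tendsto (fun M : ℕ => ∑ m ∈ Finset.range M, f m) atTop
      (𝓝 ((-∑ i ∈ Finset.Icc 1 s, ∑ k ∈ Finset.range (n+1), c i k * T i (k+1))
        + ∑ i ∈ Finset.Icc 1 s, if i = 1 then 0 else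
          (∑ k ∈ Finset.range (n+1), c i k) * hurwitzZetaValue i ((θ:ℚ):ℝ))) :=
    Tendsto.congr (fun M => (hps M).symm) (tendsto_const_nhds.add hWlim)
  have htsum : Tendsto (fun M : ℕ => ∑ m ∈ Finset.range M, f m) atTop (𝓝 (∑' m, f m)) :=
    hsummf.hasSum.tendsto_sum_nat
  have hval := tendsto_nhds_unique htsum htendsto
  -- target identification
  have part1 : ((- ∑ k ∈ Finset.range (n + 1), ∑ ℓ ∈ Finset.range (k + 1),
      ∑ i ∈ Finset.Icc 1 s, a i k / ((ℓ : ℚ) + θ) ^ i : ℚ) : ℝ)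
      = -∑ i ∈ Finset.Icc 1 s, ∑ k ∈ Finset.range (n+1), c i k * T i (k+1) := by
    push_cast
    rw [neg_inj]
    rw [Finset.sum_comm]
    refine Finset.sum_congr rfl (fun k _ => ?_)
    rw [Finset.sum_comm]
    refine Finset.sum_congr rfl (fun i _ => ?_)
    rw [hTdef, Finset.mul_sum]
    refine Finset.sum_congr rfl (fun ℓ _ => ?_)
    rw [mul_one_div]
  have part2 : ∑ i ∈ (Finset.Icc 3 s).filter (fun i => Odd i),
      ((∑ k ∈ Finset.range (n + 1), a i k : ℚ) : ℝ) * hurwitzZetaValue i ((θ:ℚ):ℝ)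
      = ∑ i ∈ Finset.Icc 1 s, if i = 1 then 0 else
        (∑ k ∈ Finset.range (n+1), c i k) * hurwitzZetaValue i ((θ:ℚ):ℝ) := by
    have hsub : (Finset.Icc 3 s).filter (fun i => Odd i) ⊆ Finset.Icc 1 s := by
      intro i hi
      rw [Finset.mem_filter, Finset.mem_Icc] at hi
      rw [Finset.mem_Icc]
      omega
    have hcast : ∀ i : ℕ, ((∑ k ∈ Finset.range (n + 1), a i k : ℚ) : ℝ)
        = ∑ k ∈ Finset.range (n+1), c i k := by
      intro i
      push_cast
      simp [hcdef]
    rw [Finset.sum_subset hsub]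
    · refine Finset.sum_congr rfl (fun i hi => ?_)
      rcases eq_or_ne i 1 with rfl | hne
      · simp only [if_pos]
        rw [hcast 1, hρ1, zero_mul]
      · rw [if_neg hne, hcast i]
    · intro i hi hni
      rw [Finset.mem_Icc] at hi
      rw [Finset.mem_filter, Finset.mem_Icc] at hni
      rw [hcast i]
      rcases eq_or_ne i 1 with rfl | hne
      · rw [hρ1, zero_mul]
      · rcases Nat.even_or_odd i with hev | hod
        · rw [hρeven i (Finset.mem_Icc.mpr hi) hev, zero_mul]
        · exfalso
          apply hni
          refine ⟨⟨?_, hi.2⟩, hod⟩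
          rcases hod with ⟨w, hw⟩
          omega
  rw [part1, part2, ← hval]
  exact hsummf.hasSum


end
end
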